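/- arXiv:2602.18411 — 4 statements merged into one kernel-verified Lean document; each statement's English description precedes it below -/
import Mathlib

section
/- Let α₁, α₂ ∈ [0,1) and γ₁, γ₂ ≥ 0. Then there exists a finite constant C = C(α₁, α₂, γ₁, γ₂) such that for all t > 0 and all ε > 0, ∫₀ᵗ s^{-α₁} (t-s)^{-α₂} · min(ε · s^{-γ₁} (t-s)^{-γ₂}, 1) ds ≤ C · t^{1-α₁-α₂} · (ℓ_{α₁,γ₁}(ε t^{-γ₁-γ₂}) + ℓ_{α₂,γ₂}(ε t^{-γ₁-γ₂})), where for α ≥ 0, γ ≥ 0 and ε > 0 the function ℓ is defined by ℓ_{α,γ}(ε) = min(ε,1) if γ < 1-α; ℓ_{α,γ}(ε) = min(ε(1+|log ε|), 1) if γ = 1-α; and ℓ_{α,γ}(ε) = min(ε^{(1-α)/γ}, 1) if γ > 1-α. -/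
open MeasureTheory Set

/-- The function ℓ_{α,γ}(ε) from the singular integral lemma. -/
noncomputable def ell (α γ ε : ℝ) : ℝ :=
  if γ < 1 - α then min ε 1
  else if γ = 1 - α then min (ε * (1 + |Real.log ε|)) 1
  else min (ε ^ ((1 - α) / γ)) 1

lemma ell_nonneg (α γ ε : ℝ) (hε : 0 ≤ ε) : 0 ≤ ell α γ ε := by
  unfold ell
  split_ifs with h1 h2
  · exact le_min hε zero_le_one
  · exact le_min (mul_nonneg hε (by positivity)) zero_le_one
  · exact le_min (Real.rpow_nonneg hε _) zero_le_one

lemma min_const_mul_le {c x : ℝ} (hc : 1 ≤ c) (hx : 0 ≤ x) :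
    min (c * x) 1 ≤ c * min x 1 := by
  rcases le_total x 1 with h | h
  · rw [min_eq_left h]; exact min_le_left _ _
  · rw [min_eq_right h, mul_one]; exact min_le_of_right_le hc

lemma integrableOn_rpow_Ioc {r b : ℝ} (hr : -1 < r) :
    IntegrableOn (fun s : ℝ => s ^ r) (Ioc 0 b) :=
  (intervalIntegral.intervalIntegrable_rpow' hr).1

lemma integrableOn_rpow_Ioo_pos {r a b : ℝ} (ha : 0 < a) (hab : a ≤ b) :
    IntegrableOn (fun s : ℝ => s ^ r) (Ioo a b) := by
  have hc : ContinuousOn (fun s : ℝ => s ^ r) (Icc a b) := by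
    intro x hx
    exact (Real.continuousAt_rpow_const x r (Or.inl (by nlinarith [hx.1]))).continuousWithinAt
  exact hc.integrableOn_Icc.mono_set Ioo_subset_Icc_self

lemma integrableOn_Ioc_of_bound {f : ℝ → ℝ} {c r b : ℝ} (hr : -1 < r)
    (hf : AEStronglyMeasurable f (volume.restrict (Ioc 0 b)))
    (h : ∀ x ∈ Ioc (0:ℝ) b, |f x| ≤ c * x ^ r) : IntegrableOn f (Ioc 0 b) := by
  refine ((integrableOn_rpow_Ioc hr).const_mul c).mono' hf ?_
  rw [ae_restrict_iff' measurableSet_Ioc]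
  filter_upwards with x hx
  simpa using h x hx

lemma setIntegral_le_setIntegral {f g : ℝ → ℝ} {s : Set ℝ} (hs : MeasurableSet s)
    (hf : AEStronglyMeasurable f (volume.restrict s)) (hg : IntegrableOn g s)
    (h0 : ∀ x ∈ s, 0 ≤ f x) (h : ∀ x ∈ s, f x ≤ g x) :
    ∫ x in s, f x ≤ ∫ x in s, g x := by
  have hfi : IntegrableOn f s := by
    refine hg.mono' hf ?_
    rw [ae_restrict_iff' hs]
    filter_upwards with x hx
    rw [Real.norm_eq_abs, abs_of_nonneg (h0 x hx)]
    exact h x hx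
  exact setIntegral_mono_on hfi hg hs h

lemma int_rpow_Ioo {r T : ℝ} (hr : -1 < r) (hT : 0 ≤ T) :
    ∫ s in Ioo (0:ℝ) T, s ^ r = T ^ (r + 1) / (r + 1) := by
  rw [← integral_Ioc_eq_integral_Ioo, ← intervalIntegral.integral_of_le hT,
    integral_rpow (Or.inl hr), Real.zero_rpow (by linarith), sub_zero]

lemma int_rpow_Ioo' {r a b : ℝ} (hr : r ≠ -1) (ha : 0 < a) (hab : a ≤ b) :
    ∫ s in Ioo a b, s ^ r = (b ^ (r + 1) - a ^ (r + 1)) / (r + 1) := by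
  rw [← integral_Ioc_eq_integral_Ioo, ← intervalIntegral.integral_of_le hab,
    integral_rpow (Or.inr ⟨hr, by rw [Set.uIcc_of_le hab]; rintro ⟨h0, -⟩; linarith⟩)]

lemma int_inv_Ioo {a b : ℝ} (ha : 0 < a) (hab : a ≤ b) :
    ∫ s in Ioo a b, s⁻¹ = Real.log (b / a) := by
  rw [← integral_Ioc_eq_integral_Ioo, ← intervalIntegral.integral_of_le hab,
    integral_inv (by rw [Set.uIcc_of_le hab]; rintro ⟨h0, -⟩; linarith)]

/-- Scaling property of `ell`. -/
lemma ell_scale (α γ K : ℝ) (hα0 : 0 ≤ α) (hα1 : α < 1) (hγ : 0 ≤ γ) (hK : 1 ≤ K) :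
    ∃ C, 0 ≤ C ∧ ∀ δ : ℝ, 0 < δ → ell α γ (K * δ) ≤ C * ell α γ δ := by
  have hK0 : 0 < K := lt_of_lt_of_le one_pos hK
  have hlogK : 0 ≤ Real.log K := Real.log_nonneg hK
  unfold ell
  split_ifs with h1 h2
  · exact ⟨K, hK0.le, fun δ hδ => min_const_mul_le hK hδ.le⟩
  · refine ⟨K * (1 + Real.log K), by positivity, fun δ hδ => ?_⟩
    have hC1 : 1 ≤ K * (1 + Real.log K) := by nlinarith
    have hlog : |Real.log (K * δ)| ≤ Real.log K + |Real.log δ| := by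
      rw [Real.log_mul (ne_of_gt hK0) (ne_of_gt hδ)]
      calc |Real.log K + Real.log δ| ≤ |Real.log K| + |Real.log δ| := abs_add_le _ _
        _ = Real.log K + |Real.log δ| := by rw [abs_of_nonneg hlogK]
    have key : K * δ * (1 + |Real.log (K * δ)|)
        ≤ (K * (1 + Real.log K)) * (δ * (1 + |Real.log δ|)) := by
      have h2' : 1 + |Real.log (K * δ)| ≤ (1 + Real.log K) * (1 + |Real.log δ|) := by
        have := abs_nonneg (Real.log δ)
        nlinarith
      nlinarith [mul_le_mul_of_nonneg_left h2' (by positivity : (0:ℝ) ≤ K * δ)]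
    calc min (K * δ * (1 + |Real.log (K * δ)|)) 1
        ≤ min ((K * (1 + Real.log K)) * (δ * (1 + |Real.log δ|))) 1 :=
          min_le_min key le_rfl
      _ ≤ (K * (1 + Real.log K)) * min (δ * (1 + |Real.log δ|)) 1 :=
          min_const_mul_le hC1 (by positivity)
  · have hγpos : 0 < γ := by
      rcases lt_trichotomy γ (1 - α) with h | h | h
      · exact absurd h h1
      · exact absurd h h2
      · linarith
    have h1α : (0:ℝ) < 1 - α := by linarith
    have hp : 0 < (1 - α) / γ := by positivity
    refine ⟨K ^ ((1 - α) / γ), Real.rpow_nonneg hK0.le _, fun δ hδ => ?_⟩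
    rw [Real.mul_rpow hK0.le hδ.le]
    exact min_const_mul_le (Real.one_le_rpow hK hp.le) (Real.rpow_nonneg hδ.le _)

/-- Core one-dimensional estimate. -/
lemma coreB (α γ : ℝ) (hα0 : 0 ≤ α) (hα1 : α < 1) (hγ : 0 ≤ γ) :
    ∃ C, 0 ≤ C ∧ ∀ T δ : ℝ, 0 < T → 0 < δ →
      ∫ s in Ioo (0:ℝ) T, s ^ (-α) * min (δ * s ^ (-γ)) 1
        ≤ C * T ^ (1 - α) * ell α γ (δ * T ^ (-γ)) := by
  have h1α : (0:ℝ) < 1 - α := by linarith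
  have hmeas : ∀ δ : ℝ, Measurable fun s : ℝ => s ^ (-α) * min (δ * s ^ (-γ)) 1 := by
    intro δ; fun_prop
  have hnn : ∀ δ : ℝ, 0 < δ → ∀ x : ℝ, 0 < x →
      0 ≤ x ^ (-α) * min (δ * x ^ (-γ)) 1 := fun δ hδ x hx =>
    mul_nonneg (Real.rpow_nonneg hx.le _)
      (le_min (mul_nonneg hδ.le (Real.rpow_nonneg hx.le _)) zero_le_one)
  have hle1 : ∀ δ : ℝ, ∀ x : ℝ, 0 < x →
      x ^ (-α) * min (δ * x ^ (-γ)) 1 ≤ x ^ (-α) := fun δ x hx =>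
    mul_le_of_le_one_right (Real.rpow_nonneg hx.le _) (min_le_right _ _)
  have hled : ∀ δ : ℝ, 0 < δ → ∀ x : ℝ, 0 < x →
      x ^ (-α) * min (δ * x ^ (-γ)) 1 ≤ δ * x ^ (-(α + γ)) := by
    intro δ hδ x hx
    calc x ^ (-α) * min (δ * x ^ (-γ)) 1 ≤ x ^ (-α) * (δ * x ^ (-γ)) :=
          mul_le_mul_of_nonneg_left (min_le_left _ _) (Real.rpow_nonneg hx.le _)
      _ = δ * x ^ (-(α + γ)) := by
          rw [show -(α + γ) = -α + -γ by ring, Real.rpow_add hx]; ring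
  have hInt : ∀ T δ : ℝ, 0 < δ →
      IntegrableOn (fun s : ℝ => s ^ (-α) * min (δ * s ^ (-γ)) 1) (Ioc 0 T) := by
    intro T δ hδ
    refine integrableOn_Ioc_of_bound (c := 1) (by linarith : (-1:ℝ) < -α)
      (hmeas δ).aestronglyMeasurable ?_
    intro x hx
    rw [abs_of_nonneg (hnn δ hδ x hx.1), one_mul]
    exact hle1 δ x hx.1
  have triv : ∀ T δ : ℝ, 0 < T → 0 < δ →
      ∫ s in Ioo (0:ℝ) T, s ^ (-α) * min (δ * s ^ (-γ)) 1 ≤ T ^ (1 - α) / (1 - α) := by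
    intro T δ hT hδ
    have h := setIntegral_le_setIntegral (s := Ioo (0:ℝ) T)
      (g := fun s : ℝ => s ^ (-α)) measurableSet_Ioo
      (hmeas δ).aestronglyMeasurable
      ((integrableOn_rpow_Ioc (by linarith)).mono_set Ioo_subset_Ioc_self)
      (fun x hx => hnn δ hδ x hx.1) (fun x hx => hle1 δ x hx.1)
    rwa [int_rpow_Ioo (by linarith) hT.le, show -α + 1 = 1 - α by ring] at h
  -- splitting bound when η < 1 (for γ > 0)
  have hsmall : ∀ T δ : ℝ, 0 < γ → 0 < T → 0 < δ → δ * T ^ (-γ) < 1 → δ ^ γ⁻¹ < T := by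
    intro T δ hγpos hT hδ hη
    have hTγ : (0:ℝ) < T ^ γ := Real.rpow_pos_of_pos hT _
    have hδT : δ < T ^ γ := by
      rw [Real.rpow_neg hT.le] at hη
      calc δ = δ * (T ^ γ)⁻¹ * T ^ γ := by field_simp
        _ < 1 * T ^ γ := mul_lt_mul_of_pos_right hη hTγ
        _ = T ^ γ := one_mul _
    calc δ ^ γ⁻¹ < (T ^ γ) ^ γ⁻¹ := Real.rpow_lt_rpow hδ.le hδT (by positivity)
      _ = T := by rw [← Real.rpow_mul hT.le, mul_inv_cancel₀ (ne_of_gt hγpos), Real.rpow_one]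
  have split2 : ∀ T δ : ℝ, 0 < γ → 0 < T → 0 < δ → δ * T ^ (-γ) < 1 →
      (∫ s in Ioo (0:ℝ) T, s ^ (-α) * min (δ * s ^ (-γ)) 1)
        ≤ (δ ^ γ⁻¹) ^ (1 - α) / (1 - α)
          + δ * ∫ s in Ioo (δ ^ γ⁻¹) T, s ^ (-(α + γ)) := by
    intro T δ hγpos hT hδ hη
    have hs₀ : 0 < δ ^ γ⁻¹ := Real.rpow_pos_of_pos hδ _
    have hs₀T : δ ^ γ⁻¹ < T := hsmall T δ hγpos hT hδ hη
    have hunion : Ioc (0:ℝ) (δ ^ γ⁻¹) ∪ Ioo (δ ^ γ⁻¹) T = Ioo 0 T :=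
      Ioc_union_Ioo_eq_Ioo hs₀.le hs₀T
    have hdisj : Disjoint (Ioc (0:ℝ) (δ ^ γ⁻¹)) (Ioo (δ ^ γ⁻¹) T) := by
      rw [Set.disjoint_left]; rintro x ⟨-, hx⟩ ⟨hx', -⟩; exact absurd hx (not_le.mpr hx')
    have hi1 := hInt (δ ^ γ⁻¹) δ hδ
    have hi2 : IntegrableOn (fun s : ℝ => s ^ (-α) * min (δ * s ^ (-γ)) 1)
        (Ioo (δ ^ γ⁻¹) T) :=
      (hInt T δ hδ).mono_set (fun x hx => ⟨lt_trans hs₀ hx.1, hx.2.le⟩)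
    rw [← hunion, setIntegral_union hdisj measurableSet_Ioo hi1 hi2]
    have hp1 : ∫ s in Ioc (0:ℝ) (δ ^ γ⁻¹), s ^ (-α) * min (δ * s ^ (-γ)) 1
        ≤ (δ ^ γ⁻¹) ^ (1 - α) / (1 - α) := by
      rw [integral_Ioc_eq_integral_Ioo]
      have h := setIntegral_le_setIntegral (s := Ioo (0:ℝ) (δ ^ γ⁻¹))
        (g := fun s : ℝ => s ^ (-α)) measurableSet_Ioo
        (hmeas δ).aestronglyMeasurable
        ((integrableOn_rpow_Ioc (by linarith)).mono_set Ioo_subset_Ioc_self)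
        (fun x hx => hnn δ hδ x hx.1) (fun x hx => hle1 δ x hx.1)
      rwa [int_rpow_Ioo (by linarith) hs₀.le, show -α + 1 = 1 - α by ring] at h
    have hp2 : ∫ s in Ioo (δ ^ γ⁻¹) T, s ^ (-α) * min (δ * s ^ (-γ)) 1
        ≤ δ * ∫ s in Ioo (δ ^ γ⁻¹) T, s ^ (-(α + γ)) := by
      have h := setIntegral_le_setIntegral (s := Ioo (δ ^ γ⁻¹) T)
        (g := fun s : ℝ => δ * s ^ (-(α + γ)))
        measurableSet_Ioo (hmeas δ).aestronglyMeasurable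
        ((integrableOn_rpow_Ioo_pos hs₀ hs₀T.le).const_mul δ)
        (fun x hx => hnn δ hδ x (lt_trans hs₀ hx.1))
        (fun x hx => hled δ hδ x (lt_trans hs₀ hx.1))
      rwa [integral_const_mul] at h
    exact add_le_add hp1 hp2
  rcases lt_trichotomy γ (1 - α) with hbr | hbr | hbr
  · -- γ < 1 - α
    have h1αγ : (0:ℝ) < 1 - α - γ := by linarith
    refine ⟨max (1 / (1 - α)) (1 / (1 - α - γ)), le_max_of_le_left (by positivity),
      fun T δ hT hδ => ?_⟩
    have hη : 0 < δ * T ^ (-γ) := by positivity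
    have hT1α : (0:ℝ) ≤ T ^ (1 - α) := Real.rpow_nonneg hT.le _
    rw [ell, if_pos hbr]
    have hii : ∫ s in Ioo (0:ℝ) T, s ^ (-α) * min (δ * s ^ (-γ)) 1
        ≤ (1 / (1 - α - γ)) * T ^ (1 - α) * (δ * T ^ (-γ)) := by
      have h := setIntegral_le_setIntegral (s := Ioo (0:ℝ) T)
        (g := fun s : ℝ => δ * s ^ (-(α + γ)))
        measurableSet_Ioo (hmeas δ).aestronglyMeasurable
        (((integrableOn_rpow_Ioc (by linarith : (-1:ℝ) < -(α + γ))).mono_set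
          Ioo_subset_Ioc_self).const_mul δ)
        (fun x hx => hnn δ hδ x hx.1) (fun x hx => hled δ hδ x hx.1)
      rw [integral_const_mul, int_rpow_Ioo (by linarith) hT.le,
        show -(α + γ) + 1 = (1 - α) + -γ by ring, Real.rpow_add hT] at h
      calc ∫ s in Ioo (0:ℝ) T, s ^ (-α) * min (δ * s ^ (-γ)) 1
          ≤ δ * (T ^ (1 - α) * T ^ (-γ) / (1 - α - γ)) := h
        _ = (1 / (1 - α - γ)) * T ^ (1 - α) * (δ * T ^ (-γ)) := by ring
    rcases min_cases (δ * T ^ (-γ)) 1 with ⟨hm, -⟩ | ⟨hm, -⟩ <;> rw [hm]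
    · exact le_trans hii (mul_le_mul_of_nonneg_right
        (mul_le_mul_of_nonneg_right (le_max_right _ _) hT1α) hη.le)
    · calc ∫ s in Ioo (0:ℝ) T, s ^ (-α) * min (δ * s ^ (-γ)) 1
          ≤ T ^ (1 - α) / (1 - α) := triv T δ hT hδ
        _ = (1 / (1 - α)) * T ^ (1 - α) := by ring
        _ ≤ max (1 / (1 - α)) (1 / (1 - α - γ)) * T ^ (1 - α) :=
            mul_le_mul_of_nonneg_right (le_max_left _ _) hT1α
        _ = max (1 / (1 - α)) (1 / (1 - α - γ)) * T ^ (1 - α) * 1 := by ring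
  · -- γ = 1 - α
    have hγpos : 0 < γ := by linarith
    refine ⟨1 / (1 - α), by positivity, fun T δ hT hδ => ?_⟩
    have hη : 0 < δ * T ^ (-γ) := by positivity
    have hT1α : (0:ℝ) ≤ T ^ (1 - α) := Real.rpow_nonneg hT.le _
    rw [ell, if_neg (by linarith), if_pos hbr]
    have htriv : ∫ s in Ioo (0:ℝ) T, s ^ (-α) * min (δ * s ^ (-γ)) 1
        ≤ 1 / (1 - α) * T ^ (1 - α) * 1 := by
      calc ∫ s in Ioo (0:ℝ) T, s ^ (-α) * min (δ * s ^ (-γ)) 1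
          ≤ T ^ (1 - α) / (1 - α) := triv T δ hT hδ
        _ = 1 / (1 - α) * T ^ (1 - α) * 1 := by ring
    rcases lt_or_ge (δ * T ^ (-γ)) 1 with hη1 | hη1
    · have hkey : ∫ s in Ioo (0:ℝ) T, s ^ (-α) * min (δ * s ^ (-γ)) 1
          ≤ 1 / (1 - α) * T ^ (1 - α) *
            ((δ * T ^ (-γ)) * (1 + |Real.log (δ * T ^ (-γ))|)) := by
        have hsp := split2 T δ hγpos hT hδ hη1
        have hs₀ : 0 < δ ^ γ⁻¹ := Real.rpow_pos_of_pos hδ _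
        have hs₀T : δ ^ γ⁻¹ < T := hsmall T δ hγpos hT hδ hη1
        have hev : ∫ s in Ioo (δ ^ γ⁻¹) T, s ^ (-(α + γ)) = Real.log (T / δ ^ γ⁻¹) := by
          rw [show -(α + γ) = (-1 : ℝ) by rw [hbr]; ring]
          simp only [Real.rpow_neg_one]
          exact int_inv_Ioo hs₀ hs₀T.le
        have hs₀1α : (δ ^ γ⁻¹) ^ (1 - α) = δ := by
          rw [← Real.rpow_mul hδ.le, hbr, inv_mul_cancel₀ (ne_of_gt h1α), Real.rpow_one]
        rw [hev, hs₀1α] at hsp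
        have hlogη : Real.log (δ * T ^ (-γ)) = Real.log δ - γ * Real.log T := by
          rw [Real.log_mul (ne_of_gt hδ) (by positivity), Real.log_rpow hT]; ring
        have habs : |Real.log (δ * T ^ (-γ))| = γ * Real.log T - Real.log δ := by
          rw [abs_of_neg (Real.log_neg hη hη1), hlogη]; ring
        have hlogTs : Real.log (T / δ ^ γ⁻¹) = γ⁻¹ * |Real.log (δ * T ^ (-γ))| := by
          rw [Real.log_div (ne_of_gt hT) (ne_of_gt hs₀), Real.log_rpow hδ, habs]
          field_simp
        have hTη : δ * T ^ (-γ) * T ^ (1 - α) = δ := by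
          rw [← hbr, mul_assoc, ← Real.rpow_add hT]; simp
        calc ∫ s in Ioo (0:ℝ) T, s ^ (-α) * min (δ * s ^ (-γ)) 1
            ≤ δ / (1 - α) + δ * Real.log (T / δ ^ γ⁻¹) := hsp
          _ = δ / (1 - α) + δ * (γ⁻¹ * |Real.log (δ * T ^ (-γ))|) := by rw [hlogTs]
          _ = 1 / (1 - α) * T ^ (1 - α) *
              ((δ * T ^ (-γ)) * (1 + |Real.log (δ * T ^ (-γ))|)) := by
            have h9 : 1 / (1 - α) * T ^ (1 - α) *
                ((δ * T ^ (-γ)) * (1 + |Real.log (δ * T ^ (-γ))|))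
                = 1 / (1 - α) * ((δ * T ^ (-γ) * T ^ (1 - α)) *
                    (1 + |Real.log (δ * T ^ (-γ))|)) := by ring
            rw [h9, hTη, hbr]
            field_simp
      rcases min_cases ((δ * T ^ (-γ)) * (1 + |Real.log (δ * T ^ (-γ))|)) 1 with
        ⟨hm, -⟩ | ⟨hm, -⟩ <;> rw [hm]
      · exact hkey
      · exact htriv
    · have h1a : 1 ≤ (δ * T ^ (-γ)) * (1 + |Real.log (δ * T ^ (-γ))|) := by
        nlinarith [abs_nonneg (Real.log (δ * T ^ (-γ)))]
      rw [min_eq_right h1a]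
      exact htriv
  · -- γ > 1 - α
    have hγpos : 0 < γ := by linarith
    have hαγ1 : 1 < α + γ := by linarith
    have hppos : 0 < (1 - α) / γ := by positivity
    refine ⟨1 / (1 - α) + 1 / (α + γ - 1),
      (add_pos (one_div_pos.mpr (by linarith)) (one_div_pos.mpr (by linarith))).le,
      fun T δ hT hδ => ?_⟩
    have hη : 0 < δ * T ^ (-γ) := by positivity
    have hT1α : (0:ℝ) ≤ T ^ (1 - α) := Real.rpow_nonneg hT.le _
    rw [ell, if_neg (by linarith), if_neg (by linarith)]
    have htriv : ∫ s in Ioo (0:ℝ) T, s ^ (-α) * min (δ * s ^ (-γ)) 1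
        ≤ (1 / (1 - α) + 1 / (α + γ - 1)) * T ^ (1 - α) * 1 := by
      calc ∫ s in Ioo (0:ℝ) T, s ^ (-α) * min (δ * s ^ (-γ)) 1
          ≤ T ^ (1 - α) / (1 - α) := triv T δ hT hδ
        _ = (1 / (1 - α)) * T ^ (1 - α) := by ring
        _ ≤ (1 / (1 - α) + 1 / (α + γ - 1)) * T ^ (1 - α) :=
            mul_le_mul_of_nonneg_right
              (le_add_of_nonneg_right (one_div_pos.mpr (by linarith)).le) hT1α
        _ = (1 / (1 - α) + 1 / (α + γ - 1)) * T ^ (1 - α) * 1 := by ring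
    rcases lt_or_ge (δ * T ^ (-γ)) 1 with hη1 | hη1
    · have hkey : ∫ s in Ioo (0:ℝ) T, s ^ (-α) * min (δ * s ^ (-γ)) 1
          ≤ (1 / (1 - α) + 1 / (α + γ - 1)) * T ^ (1 - α) *
            ((δ * T ^ (-γ)) ^ ((1 - α) / γ)) := by
        have hsp := split2 T δ hγpos hT hδ hη1
        have hs₀ : 0 < δ ^ γ⁻¹ := Real.rpow_pos_of_pos hδ _
        have hs₀T : δ ^ γ⁻¹ < T := hsmall T δ hγpos hT hδ hη1
        have hev : ∫ s in Ioo (δ ^ γ⁻¹) T, s ^ (-(α + γ))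
            = (T ^ (-(α + γ) + 1) - (δ ^ γ⁻¹) ^ (-(α + γ) + 1)) / (-(α + γ) + 1) :=
          int_rpow_Ioo' (by intro h; linarith)
            hs₀ hs₀T.le
        rw [hev] at hsp
        have hTrp : (0:ℝ) ≤ T ^ (-(α + γ) + 1) := Real.rpow_nonneg hT.le _
        have hs₀rp : (0:ℝ) ≤ (δ ^ γ⁻¹) ^ (-(α + γ) + 1) := Real.rpow_nonneg hs₀.le _
        have h2 : δ * ((T ^ (-(α + γ) + 1) - (δ ^ γ⁻¹) ^ (-(α + γ) + 1)) / (-(α + γ) + 1))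
            ≤ δ * (δ ^ γ⁻¹) ^ (-(α + γ) + 1) / (α + γ - 1) := by
          have hcne : -(α + γ) + 1 ≠ 0 := ne_of_lt (by linarith)
          have hdne : α + γ - 1 ≠ 0 := ne_of_gt (by linarith)
          have hswap : δ * ((T ^ (-(α + γ) + 1) - (δ ^ γ⁻¹) ^ (-(α + γ) + 1)) / (-(α + γ) + 1))
              = δ * (((δ ^ γ⁻¹) ^ (-(α + γ) + 1) - T ^ (-(α + γ) + 1)) / (α + γ - 1)) := by
            rw [show (-(α + γ) + 1 : ℝ) = -(α + γ - 1) by ring, div_neg]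
            ring
          rw [hswap, mul_div_assoc]
          exact mul_le_mul_of_nonneg_left
            ((div_le_div_iff_of_pos_right (by linarith)).mpr (by linarith)) hδ.le
        have e1 : δ * (δ ^ γ⁻¹) ^ (-(α + γ) + 1) = δ ^ ((1 - α) / γ) := by
          rw [← Real.rpow_mul hδ.le]
          nth_rewrite 1 [← Real.rpow_one δ]
          rw [← Real.rpow_add hδ]
          congr 1
          field_simp
          ring
        have e3 : (δ ^ γ⁻¹) ^ (1 - α) = δ ^ ((1 - α) / γ) := by
          rw [← Real.rpow_mul hδ.le]
          congr 1
          ring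
        have e2 : δ ^ ((1 - α) / γ) = (δ * T ^ (-γ)) ^ ((1 - α) / γ) * T ^ (1 - α) := by
          have hδeq : δ = (δ * T ^ (-γ)) * T ^ γ := by
            rw [mul_assoc, ← Real.rpow_add hT]; simp
          nth_rewrite 1 [hδeq]
          rw [Real.mul_rpow hη.le (Real.rpow_nonneg hT.le _), ← Real.rpow_mul hT.le]
          congr 2
          field_simp
        calc ∫ s in Ioo (0:ℝ) T, s ^ (-α) * min (δ * s ^ (-γ)) 1
            ≤ (δ ^ γ⁻¹) ^ (1 - α) / (1 - α)
              + δ * ((T ^ (-(α + γ) + 1) - (δ ^ γ⁻¹) ^ (-(α + γ) + 1)) / (-(α + γ) + 1)) :=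
              hsp
          _ ≤ (δ ^ γ⁻¹) ^ (1 - α) / (1 - α)
              + δ * (δ ^ γ⁻¹) ^ (-(α + γ) + 1) / (α + γ - 1) := by linarith
          _ = δ ^ ((1 - α) / γ) / (1 - α) + δ ^ ((1 - α) / γ) / (α + γ - 1) := by
              rw [e3, ← e1]
          _ = (1 / (1 - α) + 1 / (α + γ - 1)) * δ ^ ((1 - α) / γ) := by ring
          _ = (1 / (1 - α) + 1 / (α + γ - 1)) * T ^ (1 - α) *
              ((δ * T ^ (-γ)) ^ ((1 - α) / γ)) := by rw [e2]; ring
      rcases min_cases ((δ * T ^ (-γ)) ^ ((1 - α) / γ)) 1 with ⟨hm, -⟩ | ⟨hm, -⟩ <;> rw [hm]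
      · exact hkey
      · exact htriv
    · have h1a : 1 ≤ (δ * T ^ (-γ)) ^ ((1 - α) / γ) := Real.one_le_rpow hη1 hppos.le
      rw [min_eq_right h1a]
      exact htriv

/-- Estimate for the left half of the interval. -/
lemma lemA (α₁ α₂ γ₁ γ₂ : ℝ) (hα₁0 : 0 ≤ α₁) (hα₁1 : α₁ < 1) (hα₂0 : 0 ≤ α₂)
    (hγ₁ : 0 ≤ γ₁) (hγ₂ : 0 ≤ γ₂) :
    ∃ C, 0 ≤ C ∧ ∀ t ε : ℝ, 0 < t → 0 < ε →
      (∫ s in Ioo (0:ℝ) (t/2),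
          s ^ (-α₁) * (t - s) ^ (-α₂) * min (ε * s ^ (-γ₁) * (t - s) ^ (-γ₂)) 1)
        ≤ C * t ^ (1 - α₁ - α₂) * ell α₁ γ₁ (ε * t ^ (-(γ₁ + γ₂))) := by
  obtain ⟨CB, hCB0, hCB⟩ := coreB α₁ γ₁ hα₁0 hα₁1 hγ₁
  have hK1 : (1:ℝ) ≤ (2:ℝ) ^ (γ₁ + γ₂) := Real.one_le_rpow one_le_two (by linarith)
  obtain ⟨CK, hCK0, hCK⟩ := ell_scale α₁ γ₁ ((2:ℝ) ^ (γ₁ + γ₂)) hα₁0 hα₁1 hγ₁ hK1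
  refine ⟨CB * CK * (2:ℝ) ^ (α₁ + α₂ - 1), by positivity, fun t ε ht hε => ?_⟩
  have hu : (0:ℝ) < t / 2 := by linarith
  have hδ' : (0:ℝ) < ε * (t / 2) ^ (-γ₂) := by positivity
  -- pointwise bound and reduction to the 1D integral
  have hmono : (∫ s in Ioo (0:ℝ) (t/2),
        s ^ (-α₁) * (t - s) ^ (-α₂) * min (ε * s ^ (-γ₁) * (t - s) ^ (-γ₂)) 1)
      ≤ ∫ s in Ioo (0:ℝ) (t/2),
        (t / 2) ^ (-α₂) * (s ^ (-α₁) * min ((ε * (t / 2) ^ (-γ₂)) * s ^ (-γ₁)) 1) := by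
    have hgmeas : Measurable fun s : ℝ =>
        (t / 2) ^ (-α₂) * (s ^ (-α₁) * min ((ε * (t / 2) ^ (-γ₂)) * s ^ (-γ₁)) 1) := by
      fun_prop
    have hfmeas : Measurable fun s : ℝ =>
        s ^ (-α₁) * (t - s) ^ (-α₂) * min (ε * s ^ (-γ₁) * (t - s) ^ (-γ₂)) 1 := by
      fun_prop
    refine setIntegral_le_setIntegral measurableSet_Ioo hfmeas.aestronglyMeasurable
      ?_ ?_ ?_
    · -- integrability of the majorant
      refine (integrableOn_Ioc_of_bound (c := (t / 2) ^ (-α₂)) (by linarith : (-1:ℝ) < -α₁)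
        hgmeas.aestronglyMeasurable ?_).mono_set Ioo_subset_Ioc_self
      intro x hx
      have hx0 : 0 < x := hx.1
      have hfnn : 0 ≤ x ^ (-α₁) * min ((ε * (t / 2) ^ (-γ₂)) * x ^ (-γ₁)) 1 :=
        mul_nonneg (Real.rpow_nonneg hx0.le _)
          (le_min (mul_nonneg hδ'.le (Real.rpow_nonneg hx0.le _)) zero_le_one)
      rw [abs_of_nonneg (mul_nonneg (Real.rpow_nonneg hu.le _) hfnn)]
      exact mul_le_mul_of_nonneg_left
        (mul_le_of_le_one_right (Real.rpow_nonneg hx0.le _) (min_le_right _ _))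
        (Real.rpow_nonneg hu.le _)
    · intro x hx
      have hx0 : 0 < x := hx.1
      have htx : 0 < t - x := by have := hx.2; linarith
      exact mul_nonneg (mul_nonneg (Real.rpow_nonneg hx0.le _) (Real.rpow_nonneg htx.le _))
        (le_min (by positivity) zero_le_one)
    · intro x hx
      have hx0 : 0 < x := hx.1
      have htx2 : t / 2 ≤ t - x := by have := hx.2; linarith
      have h2 : (t - x) ^ (-α₂) ≤ (t / 2) ^ (-α₂) :=
        Real.rpow_le_rpow_of_nonpos hu htx2 (by linarith)
      have h3 : (t - x) ^ (-γ₂) ≤ (t / 2) ^ (-γ₂) :=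
        Real.rpow_le_rpow_of_nonpos hu htx2 (by linarith)
      have hmin : min (ε * x ^ (-γ₁) * (t - x) ^ (-γ₂)) 1
          ≤ min ((ε * (t / 2) ^ (-γ₂)) * x ^ (-γ₁)) 1 := by
        refine min_le_min ?_ le_rfl
        calc ε * x ^ (-γ₁) * (t - x) ^ (-γ₂) ≤ ε * x ^ (-γ₁) * (t / 2) ^ (-γ₂) :=
              mul_le_mul_of_nonneg_left h3 (by positivity)
          _ = (ε * (t / 2) ^ (-γ₂)) * x ^ (-γ₁) := by ring
      calc x ^ (-α₁) * (t - x) ^ (-α₂) * min (ε * x ^ (-γ₁) * (t - x) ^ (-γ₂)) 1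
          ≤ x ^ (-α₁) * (t / 2) ^ (-α₂) * min ((ε * (t / 2) ^ (-γ₂)) * x ^ (-γ₁)) 1 := by
            refine mul_le_mul (mul_le_mul_of_nonneg_left h2 (Real.rpow_nonneg hx0.le _))
              hmin (le_min (mul_nonneg (mul_nonneg hε.le (Real.rpow_nonneg hx0.le _))
                (Real.rpow_nonneg (by linarith [hx.2] : (0:ℝ) ≤ t - x) _)) zero_le_one) ?_
            exact mul_nonneg (Real.rpow_nonneg hx0.le _) (Real.rpow_nonneg hu.le _)
        _ = (t / 2) ^ (-α₂) * (x ^ (-α₁) * min ((ε * (t / 2) ^ (-γ₂)) * x ^ (-γ₁)) 1) := by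
            ring
  -- rewrite the argument of ell
  have hK0 : (0:ℝ) < (2:ℝ) ^ (γ₁ + γ₂) := by positivity
  have hη₀ : (0:ℝ) < ε * t ^ (-(γ₁ + γ₂)) := by positivity
  have e1 : (ε * (t / 2) ^ (-γ₂)) * (t / 2) ^ (-γ₁)
      = (2:ℝ) ^ (γ₁ + γ₂) * (ε * t ^ (-(γ₁ + γ₂))) := by
    rw [mul_assoc, ← Real.rpow_add hu, show -γ₂ + -γ₁ = -(γ₁ + γ₂) by ring,
      show t / 2 = t * 2⁻¹ by ring, Real.mul_rpow ht.le (by norm_num),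
      Real.inv_rpow (by norm_num), ← Real.rpow_neg (by norm_num), neg_neg]
    ring
  have e5 : (t / 2) ^ (-α₂) * (t / 2) ^ (1 - α₁)
      = (2:ℝ) ^ (α₁ + α₂ - 1) * t ^ (1 - α₁ - α₂) := by
    rw [← Real.rpow_add hu, show -α₂ + (1 - α₁) = 1 - α₁ - α₂ by ring,
      show t / 2 = t * 2⁻¹ by ring, Real.mul_rpow ht.le (by norm_num),
      Real.inv_rpow (by norm_num), ← Real.rpow_neg (by norm_num),
      show -(1 - α₁ - α₂) = α₁ + α₂ - 1 by ring]
    ring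
  have hBB := hCB (t / 2) (ε * (t / 2) ^ (-γ₂)) hu hδ'
  rw [e1] at hBB
  have hKK := hCK (ε * t ^ (-(γ₁ + γ₂))) hη₀
  have hell0 : 0 ≤ ell α₁ γ₁ ((2:ℝ) ^ (γ₁ + γ₂) * (ε * t ^ (-(γ₁ + γ₂)))) :=
    ell_nonneg _ _ _ (by positivity)
  calc (∫ s in Ioo (0:ℝ) (t/2),
        s ^ (-α₁) * (t - s) ^ (-α₂) * min (ε * s ^ (-γ₁) * (t - s) ^ (-γ₂)) 1)
      ≤ ∫ s in Ioo (0:ℝ) (t/2),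
        (t / 2) ^ (-α₂) * (s ^ (-α₁) * min ((ε * (t / 2) ^ (-γ₂)) * s ^ (-γ₁)) 1) := hmono
    _ = (t / 2) ^ (-α₂) * ∫ s in Ioo (0:ℝ) (t/2),
        s ^ (-α₁) * min ((ε * (t / 2) ^ (-γ₂)) * s ^ (-γ₁)) 1 := integral_const_mul _ _
    _ ≤ (t / 2) ^ (-α₂) * (CB * (t / 2) ^ (1 - α₁) *
        ell α₁ γ₁ ((2:ℝ) ^ (γ₁ + γ₂) * (ε * t ^ (-(γ₁ + γ₂))))) :=
        mul_le_mul_of_nonneg_left hBB (Real.rpow_nonneg hu.le _)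
    _ ≤ (t / 2) ^ (-α₂) * (CB * (t / 2) ^ (1 - α₁) *
        (CK * ell α₁ γ₁ (ε * t ^ (-(γ₁ + γ₂))))) := by
        refine mul_le_mul_of_nonneg_left
          (mul_le_mul_of_nonneg_left hKK ?_) (Real.rpow_nonneg hu.le _)
        exact mul_nonneg hCB0 (Real.rpow_nonneg hu.le _)
    _ = ((t / 2) ^ (-α₂) * (t / 2) ^ (1 - α₁)) *
        (CB * CK * ell α₁ γ₁ (ε * t ^ (-(γ₁ + γ₂)))) := by ring
    _ = CB * CK * (2:ℝ) ^ (α₁ + α₂ - 1) * t ^ (1 - α₁ - α₂) *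
        ell α₁ γ₁ (ε * t ^ (-(γ₁ + γ₂))) := by rw [e5]; ring

theorem singular_integral_estimate (α₁ α₂ γ₁ γ₂ : ℝ)
    (hα₁ : α₁ ∈ Set.Ico (0:ℝ) 1) (hα₂ : α₂ ∈ Set.Ico (0:ℝ) 1)
    (hγ₁ : 0 ≤ γ₁) (hγ₂ : 0 ≤ γ₂) :
    ∃ C : ℝ, 0 ≤ C ∧ ∀ t ε : ℝ, 0 < t → 0 < ε →
      (∫ s in Set.Ioo (0:ℝ) t,
          s ^ (-α₁) * (t - s) ^ (-α₂) * min (ε * s ^ (-γ₁) * (t - s) ^ (-γ₂)) 1)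
        ≤ C * t ^ (1 - α₁ - α₂) *
            (ell α₁ γ₁ (ε * t ^ (-(γ₁ + γ₂))) + ell α₂ γ₂ (ε * t ^ (-(γ₁ + γ₂)))) := by
  obtain ⟨hα₁0, hα₁1⟩ := hα₁
  obtain ⟨hα₂0, hα₂1⟩ := hα₂
  obtain ⟨C₁, hC₁0, H₁⟩ := lemA α₁ α₂ γ₁ γ₂ hα₁0 hα₁1 hα₂0 hγ₁ hγ₂
  obtain ⟨C₂, hC₂0, H₂⟩ := lemA α₂ α₁ γ₂ γ₁ hα₂0 hα₂1 hα₁0 hγ₂ hγ₁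
  refine ⟨max C₁ C₂, le_max_of_le_left hC₁0, fun t ε ht hε => ?_⟩
  have hu : (0:ℝ) < t / 2 := by linarith
  have hmeasF : Measurable fun s : ℝ =>
      s ^ (-α₁) * (t - s) ^ (-α₂) * min (ε * s ^ (-γ₁) * (t - s) ^ (-γ₂)) 1 := by fun_prop
  have hmeasG : Measurable fun s : ℝ =>
      s ^ (-α₂) * (t - s) ^ (-α₁) * min (ε * s ^ (-γ₂) * (t - s) ^ (-γ₁)) 1 := by fun_prop
  have hIntF : IntegrableOn (fun s : ℝ =>
      s ^ (-α₁) * (t - s) ^ (-α₂) * min (ε * s ^ (-γ₁) * (t - s) ^ (-γ₂)) 1)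
      (Ioc 0 (t/2)) := by
    refine integrableOn_Ioc_of_bound (c := (t/2) ^ (-α₂)) (by linarith : (-1:ℝ) < -α₁)
      hmeasF.aestronglyMeasurable ?_
    intro x hx
    have hx0 := hx.1
    have htx2 : t / 2 ≤ t - x := by linarith [hx.2]
    have htx : (0:ℝ) < t - x := lt_of_lt_of_le hu htx2
    have h2 : (t - x) ^ (-α₂) ≤ (t / 2) ^ (-α₂) :=
      Real.rpow_le_rpow_of_nonpos hu htx2 (by linarith)
    rw [abs_of_nonneg (mul_nonneg
      (mul_nonneg (Real.rpow_nonneg hx0.le _) (Real.rpow_nonneg htx.le _))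
      (le_min (mul_nonneg (mul_nonneg hε.le (Real.rpow_nonneg hx0.le _))
        (Real.rpow_nonneg htx.le _)) zero_le_one))]
    calc x ^ (-α₁) * (t - x) ^ (-α₂) * min (ε * x ^ (-γ₁) * (t - x) ^ (-γ₂)) 1
        ≤ x ^ (-α₁) * (t - x) ^ (-α₂) :=
          mul_le_of_le_one_right (mul_nonneg (Real.rpow_nonneg hx0.le _)
            (Real.rpow_nonneg htx.le _)) (min_le_right _ _)
      _ ≤ x ^ (-α₁) * (t / 2) ^ (-α₂) :=
          mul_le_mul_of_nonneg_left h2 (Real.rpow_nonneg hx0.le _)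
      _ = (t / 2) ^ (-α₂) * x ^ (-α₁) := by ring
  have hIntG : IntegrableOn (fun s : ℝ =>
      s ^ (-α₂) * (t - s) ^ (-α₁) * min (ε * s ^ (-γ₂) * (t - s) ^ (-γ₁)) 1)
      (Ioc 0 (t/2)) := by
    refine integrableOn_Ioc_of_bound (c := (t/2) ^ (-α₁)) (by linarith : (-1:ℝ) < -α₂)
      hmeasG.aestronglyMeasurable ?_
    intro x hx
    have hx0 := hx.1
    have htx2 : t / 2 ≤ t - x := by linarith [hx.2]
    have htx : (0:ℝ) < t - x := lt_of_lt_of_le hu htx2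
    have h2 : (t - x) ^ (-α₁) ≤ (t / 2) ^ (-α₁) :=
      Real.rpow_le_rpow_of_nonpos hu htx2 (by linarith)
    rw [abs_of_nonneg (mul_nonneg
      (mul_nonneg (Real.rpow_nonneg hx0.le _) (Real.rpow_nonneg htx.le _))
      (le_min (mul_nonneg (mul_nonneg hε.le (Real.rpow_nonneg hx0.le _))
        (Real.rpow_nonneg htx.le _)) zero_le_one))]
    calc x ^ (-α₂) * (t - x) ^ (-α₁) * min (ε * x ^ (-γ₂) * (t - x) ^ (-γ₁)) 1
        ≤ x ^ (-α₂) * (t - x) ^ (-α₁) :=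
          mul_le_of_le_one_right (mul_nonneg (Real.rpow_nonneg hx0.le _)
            (Real.rpow_nonneg htx.le _)) (min_le_right _ _)
      _ ≤ x ^ (-α₂) * (t / 2) ^ (-α₁) :=
          mul_le_mul_of_nonneg_left h2 (Real.rpow_nonneg hx0.le _)
      _ = (t / 2) ^ (-α₁) * x ^ (-α₂) := by ring
  -- symmetry : F (t - x) = G x
  have hFG : ∀ x : ℝ, (t - x) ^ (-α₁) * (t - (t - x)) ^ (-α₂) *
      min (ε * (t - x) ^ (-γ₁) * (t - (t - x)) ^ (-γ₂)) 1
      = x ^ (-α₂) * (t - x) ^ (-α₁) * min (ε * x ^ (-γ₂) * (t - x) ^ (-γ₁)) 1 := by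
    intro x
    rw [sub_sub_cancel,
      show ε * (t - x) ^ (-γ₁) * x ^ (-γ₂) = ε * x ^ (-γ₂) * (t - x) ^ (-γ₁) by ring]
    ring
  have hGF : ∀ x : ℝ, (t - x) ^ (-α₂) * (t - (t - x)) ^ (-α₁) *
      min (ε * (t - x) ^ (-γ₂) * (t - (t - x)) ^ (-γ₁)) 1
      = x ^ (-α₁) * (t - x) ^ (-α₂) * min (ε * x ^ (-γ₁) * (t - x) ^ (-γ₂)) 1 := by
    intro x
    rw [sub_sub_cancel,
      show ε * (t - x) ^ (-γ₂) * x ^ (-γ₁) = ε * x ^ (-γ₁) * (t - x) ^ (-γ₂) by ring]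
    ring
  have hIntF2 : IntegrableOn (fun s : ℝ =>
      s ^ (-α₁) * (t - s) ^ (-α₂) * min (ε * s ^ (-γ₁) * (t - s) ^ (-γ₂)) 1)
      (Ioo (t/2) t) := by
    have hGI : IntervalIntegrable (fun s : ℝ =>
        s ^ (-α₂) * (t - s) ^ (-α₁) * min (ε * s ^ (-γ₂) * (t - s) ^ (-γ₁)) 1)
        volume 0 (t/2) :=
      (intervalIntegrable_iff_integrableOn_Ioc_of_le hu.le).mpr hIntG
    have hcomp := (hGI.comp_sub_left t).symm
    rw [sub_zero, sub_half] at hcomp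
    have h5 : IntegrableOn (fun x : ℝ =>
        (t - x) ^ (-α₂) * (t - (t - x)) ^ (-α₁) *
          min (ε * (t - x) ^ (-γ₂) * (t - (t - x)) ^ (-γ₁)) 1) (Ioc (t/2) t) := hcomp.1
    have h6 := (h5.mono_set Ioo_subset_Ioc_self).congr_fun
      (fun x _ => hGF x) measurableSet_Ioo
    exact h6
  have hunion : Ioc (0:ℝ) (t/2) ∪ Ioo (t/2) t = Ioo 0 t :=
    Ioc_union_Ioo_eq_Ioo (by linarith) (by linarith)
  have hdisj : Disjoint (Ioc (0:ℝ) (t/2)) (Ioo (t/2) t) := by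
    rw [Set.disjoint_left]; rintro x ⟨-, hx⟩ ⟨hx', -⟩; exact absurd hx (not_le.mpr hx')
  rw [show Set.Ioo (0:ℝ) t = Ioo (0:ℝ) t from rfl, ← hunion,
    setIntegral_union hdisj measurableSet_Ioo hIntF hIntF2]
  have hP1 : ∫ s in Ioc (0:ℝ) (t/2),
      s ^ (-α₁) * (t - s) ^ (-α₂) * min (ε * s ^ (-γ₁) * (t - s) ^ (-γ₂)) 1
      ≤ C₁ * t ^ (1 - α₁ - α₂) * ell α₁ γ₁ (ε * t ^ (-(γ₁ + γ₂))) := by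
    rw [integral_Ioc_eq_integral_Ioo]
    exact H₁ t ε ht hε
  have hP2eq : ∫ s in Ioo (t/2) t,
      s ^ (-α₁) * (t - s) ^ (-α₂) * min (ε * s ^ (-γ₁) * (t - s) ^ (-γ₂)) 1
      = ∫ s in Ioo (0:ℝ) (t/2),
        s ^ (-α₂) * (t - s) ^ (-α₁) * min (ε * s ^ (-γ₂) * (t - s) ^ (-γ₁)) 1 := by
    rw [← integral_Ioc_eq_integral_Ioo, ← integral_Ioc_eq_integral_Ioo,
      ← intervalIntegral.integral_of_le (by linarith : t/2 ≤ t),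
      ← intervalIntegral.integral_of_le hu.le]
    have hchg := intervalIntegral.integral_comp_sub_left (a := 0) (b := t/2)
      (fun s : ℝ => s ^ (-α₁) * (t - s) ^ (-α₂) *
        min (ε * s ^ (-γ₁) * (t - s) ^ (-γ₂)) 1) t
    rw [sub_zero, sub_half] at hchg
    rw [← hchg]
    apply intervalIntegral.integral_congr
    intro x _
    exact hFG x
  have hH2 := H₂ t ε ht hε
  rw [show (1 - α₂ - α₁ : ℝ) = 1 - α₁ - α₂ by ring,
    show (γ₂ + γ₁ : ℝ) = γ₁ + γ₂ by ring] at hH2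
  have hX : (0:ℝ) ≤ t ^ (1 - α₁ - α₂) := Real.rpow_nonneg ht.le _
  have he₁ : 0 ≤ ell α₁ γ₁ (ε * t ^ (-(γ₁ + γ₂))) := ell_nonneg _ _ _ (by positivity)
  have he₂ : 0 ≤ ell α₂ γ₂ (ε * t ^ (-(γ₁ + γ₂))) := ell_nonneg _ _ _ (by positivity)
  have b1 : C₁ * t ^ (1 - α₁ - α₂) * ell α₁ γ₁ (ε * t ^ (-(γ₁ + γ₂)))
      ≤ max C₁ C₂ * t ^ (1 - α₁ - α₂) * ell α₁ γ₁ (ε * t ^ (-(γ₁ + γ₂))) :=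
    mul_le_mul_of_nonneg_right (mul_le_mul_of_nonneg_right (le_max_left _ _) hX) he₁
  have b2 : C₂ * t ^ (1 - α₁ - α₂) * ell α₂ γ₂ (ε * t ^ (-(γ₁ + γ₂)))
      ≤ max C₁ C₂ * t ^ (1 - α₁ - α₂) * ell α₂ γ₂ (ε * t ^ (-(γ₁ + γ₂))) :=
    mul_le_mul_of_nonneg_right (mul_le_mul_of_nonneg_right (le_max_right _ _) hX) he₂
  calc (∫ s in Ioc (0:ℝ) (t/2),
        s ^ (-α₁) * (t - s) ^ (-α₂) * min (ε * s ^ (-γ₁) * (t - s) ^ (-γ₂)) 1)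
      + ∫ s in Ioo (t/2) t,
        s ^ (-α₁) * (t - s) ^ (-α₂) * min (ε * s ^ (-γ₁) * (t - s) ^ (-γ₂)) 1
      ≤ C₁ * t ^ (1 - α₁ - α₂) * ell α₁ γ₁ (ε * t ^ (-(γ₁ + γ₂)))
        + C₂ * t ^ (1 - α₁ - α₂) * ell α₂ γ₂ (ε * t ^ (-(γ₁ + γ₂))) := by
        refine add_le_add hP1 ?_
        rw [hP2eq]
        exact hH2
    _ ≤ max C₁ C₂ * t ^ (1 - α₁ - α₂) * ell α₁ γ₁ (ε * t ^ (-(γ₁ + γ₂)))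
        + max C₁ C₂ * t ^ (1 - α₁ - α₂) * ell α₂ γ₂ (ε * t ^ (-(γ₁ + γ₂))) :=
        add_le_add b1 b2
    _ = max C₁ C₂ * t ^ (1 - α₁ - α₂) *
        (ell α₁ γ₁ (ε * t ^ (-(γ₁ + γ₂))) + ell α₂ γ₂ (ε * t ^ (-(γ₁ + γ₂)))) := by ring
end

section
/- Let α₁ ∈ [0,1), α₂ ∈ [0,1), γ > 1 - α₂. Then there is a constant C = C(α₁, α₂, γ) such that for all t > 0 and λ > 0, ∫₀ᵗ s^{-α₁} (t-s)^{-α₂} · min((λ(t-s))^{-γ}, 1) ds ≤ C · min(λ^{-1+α₂} t^{-α₁}, t^{1-α₁-α₂}). -/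
open MeasureTheory Set

private lemma aux_min_rpow {x β γ : ℝ} (hx : 0 < x) (hβ : 0 ≤ β) (hβγ : β ≤ γ) :
    min (x ^ (-γ)) 1 ≤ x ^ (-β) := by
  rcases le_or_gt 1 x with h | h
  · exact (min_le_left _ _).trans (Real.rpow_le_rpow_of_exponent_le h (by linarith))
  · exact (min_le_right _ _).trans
      (Real.one_le_rpow_of_pos_of_le_one_of_nonpos hx h.le (by linarith))

private lemma aux_ii_Ioc {c r : ℝ} (hc : 0 ≤ c) (hr : -1 < r) :
    IntegrableOn (fun s : ℝ => s ^ r) (Ioc 0 c) := by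
  have h := intervalIntegral.intervalIntegrable_rpow' (a := 0) (b := c) hr
  rwa [intervalIntegrable_iff, uIoc_of_le hc] at h

private lemma aux_min_nonneg {x : ℝ} (hx : 0 ≤ x) : 0 ≤ min x 1 := le_min hx one_pos.le

private lemma aux_cont_h {lam α₂ γ : ℝ} (hlam : 0 < lam) :
    ContinuousOn (fun u : ℝ => u ^ (-α₂) * min ((lam * u) ^ (-γ)) 1) (Ioi 0) := by
  intro u hu
  have h1 : u ≠ 0 := ne_of_gt hu
  have h2 : lam * u ≠ 0 := mul_ne_zero (ne_of_gt hlam) h1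
  refine ContinuousWithinAt.mul ?_ (ContinuousWithinAt.inf ?_ continuousWithinAt_const)
  · exact (continuousWithinAt_id.rpow_const (Or.inl h1))
  · exact ((continuousWithinAt_const.mul continuousWithinAt_id).rpow_const (Or.inl h2))

-- pointwise facts about h
private lemma aux_h_le {lam α₂ γ u : ℝ} (hlam : 0 < lam) (hγ : 0 < γ) (hu : 0 ≤ u) :
    u ^ (-α₂) * min ((lam * u) ^ (-γ)) 1 ≤ u ^ (-α₂) := by
  rcases eq_or_lt_of_le hu with h | h
  · rw [← h]
    have : lam * (0:ℝ) = 0 := mul_zero _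
    rw [this, Real.zero_rpow (neg_ne_zero.mpr (ne_of_gt hγ))]
    rw [min_eq_left zero_le_one, mul_zero]
    exact Real.rpow_nonneg le_rfl _
  · nlinarith [Real.rpow_nonneg hu (-α₂), aux_min_nonneg (Real.rpow_nonneg (by positivity) (-γ)),
      min_le_right ((lam * u) ^ (-γ)) 1, Real.rpow_pos_of_pos h (-α₂)]

private lemma aux_h_nonneg {lam α₂ γ u : ℝ} (hlam : 0 ≤ lam) (hu : 0 ≤ u) :
    0 ≤ u ^ (-α₂) * min ((lam * u) ^ (-γ)) 1 :=
  mul_nonneg (Real.rpow_nonneg hu _) (aux_min_nonneg (Real.rpow_nonneg (by positivity) _))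

private lemma aux_J_int {lam α₂ γ c : ℝ} (hlam : 0 < lam) (hα₂ : α₂ < 1) (hγ : 0 < γ)
    (hc : 0 < c) :
    IntegrableOn (fun u : ℝ => u ^ (-α₂) * min ((lam * u) ^ (-γ)) 1) (Ioc 0 c) := by
  refine Integrable.mono' (aux_ii_Ioc (r := -α₂) hc.le (by linarith)) ?_ ?_
  · exact ((aux_cont_h hlam).mono (fun x hx => hx.1)).aestronglyMeasurable measurableSet_Ioc
  · refine (ae_restrict_iff' measurableSet_Ioc).2 (ae_of_all _ fun u hu => ?_)
    rw [Real.norm_of_nonneg (aux_h_nonneg hlam.le hu.1.le)]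
    exact aux_h_le hlam hγ hu.1.le

private lemma aux_J_ii {lam α₂ γ c : ℝ} (hlam : 0 < lam) (hα₂ : α₂ < 1) (hγ : 0 < γ)
    (hc : 0 < c) :
    IntervalIntegrable (fun u : ℝ => u ^ (-α₂) * min ((lam * u) ^ (-γ)) 1) volume 0 c := by
  rw [intervalIntegrable_iff, uIoc_of_le hc.le]
  exact aux_J_int hlam hα₂ hγ hc

private lemma aux_J_le_pow {lam α₂ γ c : ℝ} (hlam : 0 < lam) (hα₂0 : 0 ≤ α₂) (hα₂ : α₂ < 1)
    (hγ : 0 < γ) (hc : 0 < c) :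
    ∫ u in (0:ℝ)..c, u ^ (-α₂) * min ((lam * u) ^ (-γ)) 1 ≤ c ^ (-α₂ + 1) / (-α₂ + 1) := by
  have h1 : ∫ u in (0:ℝ)..c, u ^ (-α₂) * min ((lam * u) ^ (-γ)) 1
      ≤ ∫ u in (0:ℝ)..c, u ^ (-α₂) := by
    refine intervalIntegral.integral_mono_on hc.le (aux_J_ii hlam hα₂ hγ hc)
      (intervalIntegral.intervalIntegrable_rpow' (by linarith)) (fun u hu => ?_)
    exact aux_h_le hlam hγ hu.1
  have h2 : ∫ u in (0:ℝ)..c, u ^ (-α₂) = c ^ (-α₂ + 1) / (-α₂ + 1) := by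
    rw [integral_rpow (Or.inl (by linarith)), Real.zero_rpow (by linarith), sub_zero]
  linarith

private lemma aux_J_le_lam {lam α₂ γ c : ℝ} (hlam : 0 < lam) (hα₂0 : 0 ≤ α₂) (hα₂ : α₂ < 1)
    (hγ : 1 - α₂ < γ) (hc : 0 < c) :
    ∫ u in (0:ℝ)..c, u ^ (-α₂) * min ((lam * u) ^ (-γ)) 1
      ≤ (1 / (1 - α₂) + 1 / (γ + α₂ - 1)) * lam ^ (-1 + α₂) := by
  have hγ0 : 0 < γ := by linarith
  have hd0 : 0 < lam⁻¹ := inv_pos.2 hlam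
  have hlr : ∀ y : ℝ, (lam⁻¹) ^ y = lam ^ (-y) := fun y => by
    rw [Real.inv_rpow hlam.le, ← Real.rpow_neg hlam.le]
  have hpow : 0 ≤ lam ^ (-1 + α₂) := Real.rpow_nonneg hlam.le _
  have hge : 0 < γ + α₂ - 1 := by linarith
  have hd_pow : lam⁻¹ ^ (-α₂ + 1) = lam ^ (-1 + α₂) := by
    rw [hlr]; congr 1; ring
  rcases le_or_gt c lam⁻¹ with h | h
  · have h1 := aux_J_le_pow hlam hα₂0 hα₂ hγ0 hc
    have h2 : c ^ (-α₂ + 1) ≤ lam⁻¹ ^ (-α₂ + 1) :=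
      Real.rpow_le_rpow hc.le h (by linarith)
    have h3 : c ^ (-α₂ + 1) / (-α₂ + 1) ≤ lam ^ (-1 + α₂) / (1 - α₂) := by
      rw [← hd_pow]
      apply div_le_div_of_nonneg_right h2 (by linarith) |>.trans
      apply le_of_eq; congr 1; ring
    have h4 : 0 < 1 / (γ + α₂ - 1) := by positivity
    have h5 : lam ^ (-1 + α₂) / (1 - α₂) = 1 / (1 - α₂) * lam ^ (-1 + α₂) := by ring
    nlinarith [mul_nonneg h4.le hpow]
  · -- split at lam⁻¹
    have hi1 : IntervalIntegrable (fun u : ℝ => u ^ (-α₂) * min ((lam * u) ^ (-γ)) 1)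
        volume 0 lam⁻¹ := aux_J_ii hlam hα₂ hγ0 hd0
    have hi2 : IntervalIntegrable (fun u : ℝ => u ^ (-α₂) * min ((lam * u) ^ (-γ)) 1)
        volume lam⁻¹ c := by
      refine (aux_J_ii hlam hα₂ hγ0 hc).mono_set ?_
      rw [uIcc_of_le hc.le, uIcc_of_le h.le]
      exact Icc_subset_Icc hd0.le le_rfl
    have hsplit := intervalIntegral.integral_add_adjacent_intervals hi1 hi2
    have hJ1 : ∫ u in (0:ℝ)..lam⁻¹, u ^ (-α₂) * min ((lam * u) ^ (-γ)) 1
        ≤ lam ^ (-1 + α₂) / (1 - α₂) := by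
      have := aux_J_le_pow hlam hα₂0 hα₂ hγ0 hd0
      rw [hd_pow] at this
      apply this.trans; apply le_of_eq; congr 1; ring
    have hJ2 : ∫ u in lam⁻¹..c, u ^ (-α₂) * min ((lam * u) ^ (-γ)) 1
        ≤ lam ^ (-1 + α₂) / (γ + α₂ - 1) := by
      set e : ℝ := -(α₂ + γ) + 1 with he_def
      have he : e < 0 := by simp only [he_def]; linarith
      have hgcont : IntervalIntegrable (fun u : ℝ => lam ^ (-γ) * u ^ (-(α₂ + γ)))
          volume lam⁻¹ c := by
        apply ContinuousOn.intervalIntegrable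
        intro u hu
        rw [uIcc_of_le h.le] at hu
        have : u ≠ 0 := ne_of_gt (lt_of_lt_of_le hd0 hu.1)
        exact continuousWithinAt_const.mul (continuousWithinAt_id.rpow_const (Or.inl this))
      have hmono : ∫ u in lam⁻¹..c, u ^ (-α₂) * min ((lam * u) ^ (-γ)) 1
          ≤ ∫ u in lam⁻¹..c, lam ^ (-γ) * u ^ (-(α₂ + γ)) := by
        refine intervalIntegral.integral_mono_on h.le hi2 hgcont (fun u hu => ?_)
        have hu0 : 0 < u := lt_of_lt_of_le hd0 hu.1
        have : min ((lam * u) ^ (-γ)) 1 ≤ (lam * u) ^ (-γ) := min_le_left _ _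
        calc u ^ (-α₂) * min ((lam * u) ^ (-γ)) 1
            ≤ u ^ (-α₂) * (lam * u) ^ (-γ) :=
              mul_le_mul_of_nonneg_left this (Real.rpow_nonneg hu0.le _)
          _ = lam ^ (-γ) * u ^ (-(α₂ + γ)) := by
              rw [Real.mul_rpow hlam.le hu0.le, neg_add, Real.rpow_add hu0]; ring
      have hcomp : ∫ u in lam⁻¹..c, lam ^ (-γ) * u ^ (-(α₂ + γ))
          ≤ lam ^ (-1 + α₂) / (γ + α₂ - 1) := by
        have hne : -(α₂ + γ) ≠ -1 := by intro hh; linarith [hge]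
        have h0m : (0:ℝ) ∉ uIcc lam⁻¹ c := by
          rw [uIcc_of_le h.le]; intro h0; exact absurd h0.1 (not_le.mpr hd0)
        rw [intervalIntegral.integral_const_mul, integral_rpow (Or.inr ⟨hne, h0m⟩)]
        have hde : lam⁻¹ ^ (-(α₂ + γ) + 1) = lam ^ (α₂ + γ - 1) := by rw [hlr]; congr 1; ring
        have hE : -(α₂+γ)+1 = -(γ+α₂-1) := by ring
        have hA : 0 ≤ c ^ (-(α₂+γ)+1) := Real.rpow_nonneg hc.le _
        have hP : 0 ≤ lam ^ (-γ) := Real.rpow_nonneg hlam.le _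
        have hL : 0 ≤ lam ^ (α₂+γ-1) := Real.rpow_nonneg hlam.le _
        have hPL : lam ^ (-γ) * lam ^ (α₂+γ-1) = lam ^ (-1+α₂) := by
          rw [← Real.rpow_add hlam]; congr 1; ring
        rw [hde]
        rw [show ((-(α₂+γ)+1 : ℝ)) = -(γ+α₂-1) from by ring] -- may rewrite exponent of c too
        rw [div_neg, ← neg_div, neg_sub, mul_div_assoc', ← hPL]
        refine (div_le_div_iff_of_pos_right hge).mpr ?_
        have hA' : 0 ≤ c ^ (-(γ+α₂-1)) := Real.rpow_nonneg hc.le _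
        nlinarith [mul_nonneg hP hA']
      exact hmono.trans hcomp
    have hring : (1/(1-α₂)+1/(γ+α₂-1)) * lam ^ (-1+α₂)
        = lam ^ (-1+α₂)/(1-α₂) + lam ^ (-1+α₂)/(γ+α₂-1) := by ring
    linarith [hJ1, hJ2, hsplit]

private lemma aux_int_Ioo {c r : ℝ} (hc : 0 < c) (hr : -1 < r) :
    ∫ s in Ioo (0:ℝ) c, s ^ r = c ^ (r + 1) / (r + 1) := by
  rw [← integral_Ioc_eq_integral_Ioo, ← intervalIntegral.integral_of_le hc.le,
    integral_rpow (Or.inl hr), Real.zero_rpow (by linarith), sub_zero]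

private lemma aux_ii_Ioo {c r : ℝ} (hc : 0 ≤ c) (hr : -1 < r) :
    IntegrableOn (fun s : ℝ => s ^ r) (Ioo 0 c) :=
  (aux_ii_Ioc hc hr).mono_set Ioo_subset_Ioc_self

private lemma aux_mul_min {r a b : ℝ} (hr : 0 ≤ r) : r * min a b = min (r * a) (r * b) := by
  rcases le_total a b with h | h
  · rw [min_eq_left h, min_eq_left (by nlinarith)]
  · rw [min_eq_right h, min_eq_right (by nlinarith)]

private lemma aux_cont_f {t lam α₁ α₂ γ : ℝ} (hlam : 0 < lam) :
    ContinuousOn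
      (fun s : ℝ => s ^ (-α₁) * (t - s) ^ (-α₂) * min ((lam * (t - s)) ^ (-γ)) 1)
      (Ioo 0 t) := by
  intro s hs
  have h1 : s ≠ 0 := ne_of_gt hs.1
  have h2 : t - s ≠ 0 := ne_of_gt (by have := hs.2; simp only [mem_Ioo] at hs; linarith [hs.2])
  have h3 : lam * (t - s) ≠ 0 := mul_ne_zero (ne_of_gt hlam) h2
  refine ContinuousWithinAt.mul (ContinuousWithinAt.mul ?_ ?_)
    (ContinuousWithinAt.inf ?_ continuousWithinAt_const)
  · exact continuousWithinAt_id.rpow_const (Or.inl h1)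
  · exact (continuousWithinAt_const.sub continuousWithinAt_id).rpow_const (Or.inl h2)
  · exact (continuousWithinAt_const.mul
      (continuousWithinAt_const.sub continuousWithinAt_id)).rpow_const (Or.inl h3)

private lemma aux_half_rpow {t e : ℝ} (ht : 0 < t) (he : -1 ≤ e) : (t/2) ^ e ≤ 2 * t ^ e := by
  have h2 : (t/2 : ℝ) = t * 2⁻¹ := by ring
  rw [h2, Real.mul_rpow ht.le (by norm_num), Real.inv_rpow (by norm_num)]
  have h1 : (2:ℝ) ^ (-1:ℝ) ≤ (2:ℝ) ^ e := Real.rpow_le_rpow_of_exponent_le one_le_two he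
  rw [Real.rpow_neg_one] at h1
  have h3 : ((2:ℝ) ^ e)⁻¹ ≤ 2 := by
    have := inv_anti₀ (by norm_num : (0:ℝ) < 2⁻¹) h1
    rwa [inv_inv] at this
  have h4 : 0 ≤ t ^ e := Real.rpow_nonneg ht.le _
  nlinarith

private lemma aux_keyA {α₁ α₂ γ t lam : ℝ} (hα₁0 : 0 ≤ α₁) (hα₁ : α₁ < 1) (hα₂0 : 0 ≤ α₂)
    (hα₂ : α₂ < 1) (hγ : 1 - α₂ < γ) (ht : 0 < t) (hlam : 0 < lam) :
    ((t/2) ^ (-α₁ + 1) / (-α₁ + 1)) * ((t/2) ^ (-α₂) * min ((lam * (t/2)) ^ (-γ)) 1)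
      ≤ (2 / (1 - α₁)) * min (lam ^ (-1 + α₂) * t ^ (-α₁)) (t ^ (1 - α₁ - α₂)) := by
  have hc : 0 < t/2 := by linarith
  have hm0 : 0 ≤ min ((lam * (t/2)) ^ (-γ)) 1 :=
    aux_min_nonneg (Real.rpow_nonneg (by positivity) _)
  have hm1 : min ((lam * (t/2)) ^ (-γ)) 1 ≤ 1 := min_le_right _ _
  have hcomb : (t/2) ^ (-α₁ + 1) * (t/2) ^ (-α₂) = (t/2) ^ (1 - α₁ - α₂) := by
    rw [← Real.rpow_add hc]; congr 1; ring
  set m := min ((lam * (t/2)) ^ (-γ)) 1 with hm_def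
  have key : (t/2) ^ (1 - α₁ - α₂) * m ≤ 2 * min (lam ^ (-1 + α₂) * t ^ (-α₁)) (t ^ (1 - α₁ - α₂)) := by
    have hcE : 0 ≤ (t/2) ^ (1 - α₁ - α₂) := Real.rpow_nonneg hc.le _
    rw [show (2:ℝ) * min (lam ^ (-1 + α₂) * t ^ (-α₁)) (t ^ (1 - α₁ - α₂))
        = min (2 * (lam ^ (-1 + α₂) * t ^ (-α₁))) (2 * t ^ (1 - α₁ - α₂)) from
      aux_mul_min (by norm_num)]
    refine le_min ?_ ?_
    · -- use m ≤ (lam * (t/2)) ^ (-(1-α₂))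
      have hmle : m ≤ (lam * (t/2)) ^ (-(1 - α₂)) :=
        aux_min_rpow (by positivity) (by linarith) (by linarith)
      have hsplit : (lam * (t/2)) ^ (-(1 - α₂)) = lam ^ (-(1 - α₂)) * (t/2) ^ (-(1 - α₂)) :=
        Real.mul_rpow hlam.le hc.le
      have hccomb : (t/2) ^ (1 - α₁ - α₂) * (t/2) ^ (-(1 - α₂)) = (t/2) ^ (-α₁) := by
        rw [← Real.rpow_add hc]; congr 1; ring
      have hlam_eq : lam ^ (-(1 - α₂)) = lam ^ (-1 + α₂) := by congr 1; ring
      have hhalf : (t/2) ^ (-α₁) ≤ 2 * t ^ (-α₁) := aux_half_rpow ht (by linarith)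
      have hlp : 0 ≤ lam ^ (-1 + α₂) := Real.rpow_nonneg hlam.le _
      calc (t/2) ^ (1 - α₁ - α₂) * m
          ≤ (t/2) ^ (1 - α₁ - α₂) * (lam ^ (-(1 - α₂)) * (t/2) ^ (-(1 - α₂))) := by
            rw [← hsplit]; exact mul_le_mul_of_nonneg_left hmle hcE
        _ = lam ^ (-1 + α₂) * ((t/2) ^ (1 - α₁ - α₂) * (t/2) ^ (-(1 - α₂))) := by
            rw [hlam_eq]; ring
        _ = lam ^ (-1 + α₂) * (t/2) ^ (-α₁) := by rw [hccomb]
        _ ≤ lam ^ (-1 + α₂) * (2 * t ^ (-α₁)) := mul_le_mul_of_nonneg_left hhalf hlp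
        _ = 2 * (lam ^ (-1 + α₂) * t ^ (-α₁)) := by ring
    · have hhalf : (t/2) ^ (1 - α₁ - α₂) ≤ 2 * t ^ (1 - α₁ - α₂) :=
        aux_half_rpow ht (by linarith)
      nlinarith
  calc ((t/2) ^ (-α₁ + 1) / (-α₁ + 1)) * ((t/2) ^ (-α₂) * m)
      = (1/(1 - α₁)) * ((t/2) ^ (-α₁ + 1) * (t/2) ^ (-α₂) * m) := by ring
    _ = (1/(1 - α₁)) * ((t/2) ^ (1 - α₁ - α₂) * m) := by rw [hcomb]
    _ ≤ (1/(1 - α₁)) * (2 * min (lam ^ (-1 + α₂) * t ^ (-α₁)) (t ^ (1 - α₁ - α₂))) := by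
        have h1α : (0:ℝ) < 1 - α₁ := by linarith
        apply mul_le_mul_of_nonneg_left key (by positivity)
    _ = (2 / (1 - α₁)) * min (lam ^ (-1 + α₂) * t ^ (-α₁)) (t ^ (1 - α₁ - α₂)) := by ring

private lemma aux_partA {α₁ α₂ γ t lam : ℝ} (hα₁0 : 0 ≤ α₁) (hα₁ : α₁ < 1) (hα₂0 : 0 ≤ α₂)
    (hα₂ : α₂ < 1) (hγ : 1 - α₂ < γ) (ht : 0 < t) (hlam : 0 < lam) :
    IntegrableOn (fun s : ℝ => s ^ (-α₁) * (t - s) ^ (-α₂) * min ((lam * (t - s)) ^ (-γ)) 1)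
      (Ioo 0 (t/2)) ∧
    ∫ s in Ioo (0:ℝ) (t/2), s ^ (-α₁) * (t - s) ^ (-α₂) * min ((lam * (t - s)) ^ (-γ)) 1
      ≤ (2 / (1 - α₁)) * min (lam ^ (-1 + α₂) * t ^ (-α₁)) (t ^ (1 - α₁ - α₂)) := by
  have hc : 0 < t/2 := by linarith
  have hγ0 : 0 < γ := by linarith
  set K0 : ℝ := (t/2) ^ (-α₂) * min ((lam * (t/2)) ^ (-γ)) 1 with hK0_def
  have hK0nn : 0 ≤ K0 :=
    mul_nonneg (Real.rpow_nonneg hc.le _) (aux_min_nonneg (Real.rpow_nonneg (by positivity) _))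
  have hgint : IntegrableOn (fun s : ℝ => s ^ (-α₁) * K0) (Ioo 0 (t/2)) :=
    (aux_ii_Ioo (r := -α₁) hc.le (by linarith)).mul_const _
  have hpt : ∀ s ∈ Ioo (0:ℝ) (t/2),
      s ^ (-α₁) * (t - s) ^ (-α₂) * min ((lam * (t - s)) ^ (-γ)) 1 ≤ s ^ (-α₁) * K0 := by
    intro s hs
    obtain ⟨hs0, hs2⟩ := hs
    have hts : t/2 ≤ t - s := by linarith
    have hts0 : 0 < t - s := lt_of_lt_of_le hc hts
    have hs' : 0 ≤ s ^ (-α₁) := Real.rpow_nonneg hs0.le _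
    have b1 : (t - s) ^ (-α₂) ≤ (t/2) ^ (-α₂) :=
      Real.rpow_le_rpow_of_nonpos hc hts (by linarith)
    have b2 : (lam * (t - s)) ^ (-γ) ≤ (lam * (t/2)) ^ (-γ) :=
      Real.rpow_le_rpow_of_nonpos (by positivity)
        (mul_le_mul_of_nonneg_left hts hlam.le) (by linarith)
    have b3 : min ((lam * (t - s)) ^ (-γ)) 1 ≤ min ((lam * (t/2)) ^ (-γ)) 1 :=
      min_le_min b2 le_rfl
    have hmnn : 0 ≤ min ((lam * (t - s)) ^ (-γ)) 1 :=
      aux_min_nonneg (Real.rpow_nonneg (by positivity) _)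
    calc s ^ (-α₁) * (t - s) ^ (-α₂) * min ((lam * (t - s)) ^ (-γ)) 1
        ≤ s ^ (-α₁) * (t/2) ^ (-α₂) * min ((lam * (t - s)) ^ (-γ)) 1 :=
          mul_le_mul_of_nonneg_right (mul_le_mul_of_nonneg_left b1 hs') hmnn
      _ ≤ s ^ (-α₁) * (t/2) ^ (-α₂) * min ((lam * (t/2)) ^ (-γ)) 1 :=
          mul_le_mul_of_nonneg_left b3 (mul_nonneg hs' (Real.rpow_nonneg hc.le _))
      _ = s ^ (-α₁) * K0 := by rw [hK0_def]; ring
  have hfint : IntegrableOn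
      (fun s : ℝ => s ^ (-α₁) * (t - s) ^ (-α₂) * min ((lam * (t - s)) ^ (-γ)) 1)
      (Ioo 0 (t/2)) := by
    refine Integrable.mono' hgint
      (((aux_cont_f hlam).mono (Ioo_subset_Ioo le_rfl (by linarith))).aestronglyMeasurable
        measurableSet_Ioo) ?_
    refine (ae_restrict_iff' measurableSet_Ioo).2 (ae_of_all _ fun s hs => ?_)
    obtain ⟨hs0, hs2⟩ := hs
    have hts0 : 0 < t - s := by linarith
    have hnn : 0 ≤ s ^ (-α₁) * (t - s) ^ (-α₂) * min ((lam * (t - s)) ^ (-γ)) 1 :=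
      mul_nonneg (mul_nonneg (Real.rpow_nonneg hs0.le _) (Real.rpow_nonneg hts0.le _))
        (aux_min_nonneg (Real.rpow_nonneg (by positivity) _))
    rw [Real.norm_of_nonneg hnn]
    exact hpt s ⟨hs0, hs2⟩
  refine ⟨hfint, ?_⟩
  calc ∫ s in Ioo (0:ℝ) (t/2), s ^ (-α₁) * (t - s) ^ (-α₂) * min ((lam * (t - s)) ^ (-γ)) 1
      ≤ ∫ s in Ioo (0:ℝ) (t/2), s ^ (-α₁) * K0 :=
        setIntegral_mono_on hfint hgint measurableSet_Ioo hpt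
    _ = (∫ s in Ioo (0:ℝ) (t/2), s ^ (-α₁)) * K0 := by rw [integral_mul_const]
    _ = ((t/2) ^ (-α₁ + 1) / (-α₁ + 1)) * K0 := by rw [aux_int_Ioo hc (by linarith)]
    _ ≤ (2 / (1 - α₁)) * min (lam ^ (-1 + α₂) * t ^ (-α₁)) (t ^ (1 - α₁ - α₂)) :=
        aux_keyA hα₁0 hα₁ hα₂0 hα₂ hγ ht hlam

private lemma aux_partB {α₁ α₂ γ t lam : ℝ} (hα₁0 : 0 ≤ α₁) (hα₁ : α₁ < 1) (hα₂0 : 0 ≤ α₂)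
    (hα₂ : α₂ < 1) (hγ : 1 - α₂ < γ) (ht : 0 < t) (hlam : 0 < lam) :
    IntegrableOn (fun s : ℝ => s ^ (-α₁) * (t - s) ^ (-α₂) * min ((lam * (t - s)) ^ (-γ)) 1)
      (Ico (t/2) t) ∧
    ∫ s in Ico (t/2) t, s ^ (-α₁) * (t - s) ^ (-α₂) * min ((lam * (t - s)) ^ (-γ)) 1
      ≤ (2 * (1 / (1 - α₂) + 1 / (γ + α₂ - 1)))
          * min (lam ^ (-1 + α₂) * t ^ (-α₁)) (t ^ (1 - α₁ - α₂)) := by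
  have hc : 0 < t/2 := by linarith
  have hct : t/2 < t := by linarith
  have hγ0 : 0 < γ := by linarith
  have hge : 0 < γ + α₂ - 1 := by linarith
  set K : ℝ := 1 / (1 - α₂) + 1 / (γ + α₂ - 1) with hK_def
  have hKnn : 0 ≤ K := by
    have h1 : (0:ℝ) < 1 - α₂ := by linarith
    positivity
  -- integrability of u ↦ h(t-u) on Ioo (t/2) t
  have hIh : IntervalIntegrable (fun u : ℝ => u ^ (-α₂) * min ((lam * u) ^ (-γ)) 1)
      volume 0 (t/2) := aux_J_ii hlam hα₂ hγ0 hc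
  have hIcomp := (hIh.comp_sub_left t).symm
  rw [sub_zero, sub_half] at hIcomp
  have hcompIoc : IntegrableOn (fun s : ℝ => (t - s) ^ (-α₂) * min ((lam * (t - s)) ^ (-γ)) 1)
      (Ioc (t/2) t) := by
    rwa [intervalIntegrable_iff, uIoc_of_le hct.le] at hIcomp
  have hcompIoo : IntegrableOn (fun s : ℝ => (t - s) ^ (-α₂) * min ((lam * (t - s)) ^ (-γ)) 1)
      (Ioo (t/2) t) := hcompIoc.mono_set Ioo_subset_Ioc_self
  have hgint : IntegrableOn
      (fun s : ℝ => (t/2) ^ (-α₁) * ((t - s) ^ (-α₂) * min ((lam * (t - s)) ^ (-γ)) 1))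
      (Ioo (t/2) t) := hcompIoo.const_mul _
  have hpt : ∀ s ∈ Ioo (t/2) t,
      s ^ (-α₁) * (t - s) ^ (-α₂) * min ((lam * (t - s)) ^ (-γ)) 1
        ≤ (t/2) ^ (-α₁) * ((t - s) ^ (-α₂) * min ((lam * (t - s)) ^ (-γ)) 1) := by
    intro s hs
    obtain ⟨hs1, hs2⟩ := hs
    have hts0 : 0 < t - s := by linarith
    have hb : s ^ (-α₁) ≤ (t/2) ^ (-α₁) :=
      Real.rpow_le_rpow_of_nonpos hc hs1.le (by linarith)
    have hhn : 0 ≤ (t - s) ^ (-α₂) * min ((lam * (t - s)) ^ (-γ)) 1 :=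
      aux_h_nonneg hlam.le hts0.le
    calc s ^ (-α₁) * (t - s) ^ (-α₂) * min ((lam * (t - s)) ^ (-γ)) 1
        = s ^ (-α₁) * ((t - s) ^ (-α₂) * min ((lam * (t - s)) ^ (-γ)) 1) := by ring
      _ ≤ (t/2) ^ (-α₁) * ((t - s) ^ (-α₂) * min ((lam * (t - s)) ^ (-γ)) 1) :=
          mul_le_mul_of_nonneg_right hb hhn
  have hfintIoo : IntegrableOn
      (fun s : ℝ => s ^ (-α₁) * (t - s) ^ (-α₂) * min ((lam * (t - s)) ^ (-γ)) 1)
      (Ioo (t/2) t) := by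
    refine Integrable.mono' hgint
      (((aux_cont_f hlam).mono (Ioo_subset_Ioo hc.le le_rfl)).aestronglyMeasurable
        measurableSet_Ioo) ?_
    refine (ae_restrict_iff' measurableSet_Ioo).2 (ae_of_all _ fun s hs => ?_)
    obtain ⟨hs1, hs2⟩ := hs
    have hts0 : 0 < t - s := by linarith
    have hs0 : 0 < s := lt_trans hc hs1
    have hnn : 0 ≤ s ^ (-α₁) * (t - s) ^ (-α₂) * min ((lam * (t - s)) ^ (-γ)) 1 :=
      mul_nonneg (mul_nonneg (Real.rpow_nonneg hs0.le _) (Real.rpow_nonneg hts0.le _))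
        (aux_min_nonneg (Real.rpow_nonneg (by positivity) _))
    rw [Real.norm_of_nonneg hnn]
    exact hpt s ⟨hs1, hs2⟩
  have hfintIco : IntegrableOn
      (fun s : ℝ => s ^ (-α₁) * (t - s) ^ (-α₂) * min ((lam * (t - s)) ^ (-γ)) 1)
      (Ico (t/2) t) := (integrableOn_Ico_iff_integrableOn_Ioo (by exact enorm_ne_top)).2 hfintIoo
  refine ⟨hfintIco, ?_⟩
  -- the inner integral J
  set J : ℝ := ∫ u in (0:ℝ)..(t/2), u ^ (-α₂) * min ((lam * u) ^ (-γ)) 1 with hJ_def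
  have hJnn : 0 ≤ J := by
    rw [hJ_def]
    exact intervalIntegral.integral_nonneg hc.le
      (fun u hu => aux_h_nonneg hlam.le hu.1)
  have hJ1 : J ≤ K * lam ^ (-1 + α₂) := by
    have := aux_J_le_lam hlam hα₂0 hα₂ hγ hc
    rw [hJ_def]; exact this
  have hJ2 : J ≤ t ^ (-α₂ + 1) / (-α₂ + 1) := by
    have h1 := aux_J_le_pow hlam hα₂0 hα₂ hγ0 hc
    have h2 : (t/2) ^ (-α₂ + 1) ≤ t ^ (-α₂ + 1) :=
      Real.rpow_le_rpow hc.le (by linarith) (by linarith)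
    rw [hJ_def]
    exact h1.trans (div_le_div_of_nonneg_right h2 (by linarith) |>.trans le_rfl)
  -- change of variables
  have hchange : ∫ s in Ioo (t/2) t, (t - s) ^ (-α₂) * min ((lam * (t - s)) ^ (-γ)) 1 = J := by
    rw [← integral_Ioc_eq_integral_Ioo, ← intervalIntegral.integral_of_le hct.le, hJ_def]
    have := intervalIntegral.integral_comp_sub_left
      (fun u : ℝ => u ^ (-α₂) * min ((lam * u) ^ (-γ)) 1) t (a := t/2) (b := t)
    rw [this, sub_self, sub_half]
  -- final bounds
  have hhalf : (t/2) ^ (-α₁) ≤ 2 * t ^ (-α₁) := aux_half_rpow ht (by linarith)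
  have htp : 0 ≤ t ^ (-α₁) := Real.rpow_nonneg ht.le _
  have hmin : t ^ (-α₁) * J ≤ K * min (lam ^ (-1 + α₂) * t ^ (-α₁)) (t ^ (1 - α₁ - α₂)) := by
    rw [show K * min (lam ^ (-1 + α₂) * t ^ (-α₁)) (t ^ (1 - α₁ - α₂))
        = min (K * (lam ^ (-1 + α₂) * t ^ (-α₁))) (K * t ^ (1 - α₁ - α₂)) from
      aux_mul_min hKnn]
    refine le_min ?_ ?_
    · calc t ^ (-α₁) * J ≤ t ^ (-α₁) * (K * lam ^ (-1 + α₂)) :=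
            mul_le_mul_of_nonneg_left hJ1 htp
        _ = K * (lam ^ (-1 + α₂) * t ^ (-α₁)) := by ring
    · have hcomb : t ^ (-α₁) * t ^ (-α₂ + 1) = t ^ (1 - α₁ - α₂) := by
        rw [← Real.rpow_add ht]; congr 1; ring
      have htq : 0 ≤ t ^ (1 - α₁ - α₂) := Real.rpow_nonneg ht.le _
      have hKge : 1 / (1 - α₂) ≤ K := by
        rw [hK_def]
        have : 0 < 1 / (γ + α₂ - 1) := by positivity
        linarith
      calc t ^ (-α₁) * J ≤ t ^ (-α₁) * (t ^ (-α₂ + 1) / (-α₂ + 1)) :=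
            mul_le_mul_of_nonneg_left hJ2 htp
        _ = (1 / (1 - α₂)) * (t ^ (-α₁) * t ^ (-α₂ + 1)) := by ring
        _ = (1 / (1 - α₂)) * t ^ (1 - α₁ - α₂) := by rw [hcomb]
        _ ≤ K * t ^ (1 - α₁ - α₂) := mul_le_mul_of_nonneg_right hKge htq
  calc ∫ s in Ico (t/2) t, s ^ (-α₁) * (t - s) ^ (-α₂) * min ((lam * (t - s)) ^ (-γ)) 1
      = ∫ s in Ioo (t/2) t, s ^ (-α₁) * (t - s) ^ (-α₂) * min ((lam * (t - s)) ^ (-γ)) 1 :=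
        integral_Ico_eq_integral_Ioo
    _ ≤ ∫ s in Ioo (t/2) t,
          (t/2) ^ (-α₁) * ((t - s) ^ (-α₂) * min ((lam * (t - s)) ^ (-γ)) 1) :=
        setIntegral_mono_on hfintIoo hgint measurableSet_Ioo hpt
    _ = (t/2) ^ (-α₁)
          * ∫ s in Ioo (t/2) t, (t - s) ^ (-α₂) * min ((lam * (t - s)) ^ (-γ)) 1 := by
        rw [integral_const_mul]
    _ = (t/2) ^ (-α₁) * J := by rw [hchange]
    _ ≤ (2 * t ^ (-α₁)) * J := mul_le_mul_of_nonneg_right hhalf hJnn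
    _ = 2 * (t ^ (-α₁) * J) := by ring
    _ ≤ 2 * (K * min (lam ^ (-1 + α₂) * t ^ (-α₁)) (t ^ (1 - α₁ - α₂))) := by linarith
    _ = (2 * K) * min (lam ^ (-1 + α₂) * t ^ (-α₁)) (t ^ (1 - α₁ - α₂)) := by ring

theorem singular_integral_estimate_special (α₁ α₂ γ : ℝ)
    (hα₁ : α₁ ∈ Set.Ico (0:ℝ) 1) (hα₂ : α₂ ∈ Set.Ico (0:ℝ) 1)
    (hγ : 1 - α₂ < γ) :
    ∃ C : ℝ, 0 ≤ C ∧ ∀ t lam : ℝ, 0 < t → 0 < lam →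
      (∫ s in Set.Ioo (0:ℝ) t,
          s ^ (-α₁) * (t - s) ^ (-α₂) * min ((lam * (t - s)) ^ (-γ)) 1)
        ≤ C * min (lam ^ (-1 + α₂) * t ^ (-α₁)) (t ^ (1 - α₁ - α₂)) := by
  obtain ⟨hα₁0, hα₁1⟩ := hα₁
  obtain ⟨hα₂0, hα₂1⟩ := hα₂
  refine ⟨2 / (1 - α₁) + 2 * (1 / (1 - α₂) + 1 / (γ + α₂ - 1)), ?_, ?_⟩
  · have h1 : (0:ℝ) < 1 - α₁ := by linarith
    have h2 : (0:ℝ) < 1 - α₂ := by linarith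
    have h3 : (0:ℝ) < γ + α₂ - 1 := by linarith
    positivity
  intro t lam ht hlam
  have hc : 0 < t/2 := by linarith
  have hct : t/2 < t := by linarith
  obtain ⟨hintA, hboundA⟩ := aux_partA hα₁0 hα₁1 hα₂0 hα₂1 hγ ht hlam
  obtain ⟨hintB, hboundB⟩ := aux_partB hα₁0 hα₁1 hα₂0 hα₂1 hγ ht hlam
  have hsplit : Ioo (0:ℝ) t = Ioo 0 (t/2) ∪ Ico (t/2) t :=
    (Ioo_union_Ico_eq_Ioo hc hct.le).symm
  have hdisj : Disjoint (Ioo (0:ℝ) (t/2)) (Ico (t/2) t) := by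
    rw [Set.disjoint_left]
    rintro x hx1 hx2
    exact absurd hx2.1 (not_le.mpr hx1.2)
  rw [hsplit, setIntegral_union hdisj measurableSet_Ico hintA hintB]
  have := add_le_add hboundA hboundB
  calc (∫ s in Ioo (0:ℝ) (t/2), s ^ (-α₁) * (t - s) ^ (-α₂) * min ((lam * (t - s)) ^ (-γ)) 1)
      + ∫ s in Ico (t/2) t, s ^ (-α₁) * (t - s) ^ (-α₂) * min ((lam * (t - s)) ^ (-γ)) 1
      ≤ (2 / (1 - α₁)) * min (lam ^ (-1 + α₂) * t ^ (-α₁)) (t ^ (1 - α₁ - α₂))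
        + (2 * (1 / (1 - α₂) + 1 / (γ + α₂ - 1)))
            * min (lam ^ (-1 + α₂) * t ^ (-α₁)) (t ^ (1 - α₁ - α₂)) := this
    _ = (2 / (1 - α₁) + 2 * (1 / (1 - α₂) + 1 / (γ + α₂ - 1)))
          * min (lam ^ (-1 + α₂) * t ^ (-α₁)) (t ^ (1 - α₁ - α₂)) := by ring
end

section
/- Let d ≥ 1 and for t > 0 let g_t(x,v) = (π² t⁴/3)^{-d/2} exp(−(3|x|² + |3x − 2tv|²)/(2t³)) be a probability density on ℝ^d × ℝ^d. For p = (p_x, p_v) ∈ [1,∞]², define the mixed norm ‖f‖_p = (∫_{ℝ^d} (∫_{ℝ^d} |f(x,v)|^{p_x} dx)^{p_v/p_x} dv)^{1/p_v}. Then there exists a constant C₁ = C₁(d, p) such that for every t ∈ (0,1], ‖g_t‖_p ≤ C₁ · t^{−(d/2)(3(1−1/p_x) + (1−1/p_v))}. -/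
open MeasureTheory Real ENNReal

/-- The mixed Lebesgue norm ‖f‖_{(p_x,p_v)} on ℝ^d × ℝ^d:
    the L^{p_x} norm in x followed by the L^{p_v} norm in v. -/
noncomputable def mixedNorm (d : ℕ) (px pv : ℝ≥0∞)
    (f : EuclideanSpace ℝ (Fin d) × EuclideanSpace ℝ (Fin d) → ℝ) : ℝ≥0∞ :=
  eLpNorm (fun v => (eLpNorm (fun x => f (x, v)) px volume).toReal) pv volume

/-- The Gaussian density g_t of (∫₀ᵗ W_s ds, W_t). -/
noncomputable def kineticGauss (d : ℕ) (t : ℝ)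
    (x v : EuclideanSpace ℝ (Fin d)) : ℝ :=
  (π ^ 2 * t ^ 4 / 3) ^ (-(d : ℝ) / 2) *
    Real.exp (-(3 * ‖x‖ ^ 2 + ‖(3:ℝ) • x - (2 * t) • v‖ ^ 2) / (2 * t ^ 3))

section aux

variable {d : ℕ}

local notation "E" => EuclideanSpace ℝ (Fin d)

lemma integrable_gaussE {b : ℝ} (hb : 0 < b) :
    Integrable (fun x : E => rexp (-b * ‖x‖ ^ 2)) := by
  have h := (GaussianFourier.integrable_cexp_neg_mul_sq_norm_add (V := E)
    (b := (b : ℂ)) (by simpa using hb) 0 0).re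
  refine h.congr (Filter.Eventually.of_forall fun x => ?_)
  have h2 : (-(b:ℂ) * (‖x‖:ℂ) ^ 2) = ((-b * ‖x‖ ^ 2 : ℝ) : ℂ) := by
    push_cast; ring
  simp only [zero_mul, add_zero, h2, RCLike.re_to_complex, Complex.exp_ofReal_re]

lemma gauss_eLpNorm_le {p : ℝ≥0∞} (hp : 1 ≤ p) {b : ℝ} (hb : 0 < b) :
    eLpNorm (fun x : E => rexp (-b * ‖x‖ ^ 2)) p volume
      ≤ ENNReal.ofReal ((π / b) ^ ((d : ℝ) / 2 * (1 / p).toReal)) := by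
  rcases eq_or_ne p ∞ with rfl | hptop
  · simp only [one_div, ENNReal.inv_top, ENNReal.toReal_zero, mul_zero, Real.rpow_zero,
      ENNReal.ofReal_one]
    rw [eLpNorm_exponent_top]
    refine (eLpNormEssSup_le_of_ae_bound (C := 1) ?_).trans (by simp)
    filter_upwards with x
    rw [Real.norm_eq_abs, abs_of_nonneg (Real.exp_nonneg _)]
    exact Real.exp_le_one_iff.mpr (by nlinarith [sq_nonneg ‖x‖])
  · have hp0 : p ≠ 0 := (lt_of_lt_of_le zero_lt_one hp).ne'
    have hq1 : 1 ≤ p.toReal := by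
      simpa using ENNReal.toReal_mono hptop hp
    set q := p.toReal with hqdef
    have hq0 : 0 < q := lt_of_lt_of_le one_pos hq1
    have hqb : 0 < q * b := mul_pos hq0 hb
    rw [eLpNorm_eq_lintegral_rpow_enorm_toReal hp0 hptop]
    have key : ∫⁻ x : E, ‖rexp (-b * ‖x‖ ^ 2)‖ₑ ^ q
        = ENNReal.ofReal ((π / (q * b)) ^ ((d : ℝ) / 2)) := by
      have hpt : ∀ x : E, ‖rexp (-b * ‖x‖ ^ 2)‖ₑ ^ q
          = ENNReal.ofReal (rexp (-(q * b) * ‖x‖ ^ 2)) := by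
        intro x
        rw [Real.enorm_eq_ofReal (Real.exp_nonneg _),
          ENNReal.ofReal_rpow_of_nonneg (Real.exp_nonneg _) hq0.le,
          ← Real.exp_mul]
        congr 2
        ring
      simp only [hpt]
      rw [← ofReal_integral_eq_lintegral_ofReal (integrable_gaussE hqb)
        (Filter.Eventually.of_forall fun x => Real.exp_nonneg _),
        GaussianFourier.integral_rexp_neg_mul_sq_norm hqb, finrank_euclideanSpace_fin]
    rw [key, ENNReal.ofReal_rpow_of_nonneg (by positivity) (by positivity),
      ← Real.rpow_mul (by positivity)]
    apply ENNReal.ofReal_le_ofReal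
    have hinv : (1 / p).toReal = 1 / q := by
      rw [one_div, ENNReal.toReal_inv, hqdef, one_div]
    rw [hinv]
    apply Real.rpow_le_rpow (by positivity) ?_ (by positivity)
    gcongr
    nlinarith

lemma kineticGauss_nonneg (t : ℝ) (x v : E) : 0 ≤ kineticGauss d t x v := by
  unfold kineticGauss
  positivity

lemma kineticGauss_le {t : ℝ} (ht : 0 < t) (x v : E) :
    kineticGauss d t x v ≤ (π ^ 2 * t ^ 4 / 3) ^ (-(d : ℝ) / 2) *
      (rexp (-(1 / (4 * t ^ 3)) * ‖x‖ ^ 2) * rexp (-(1 / (4 * t)) * ‖v‖ ^ 2)) := by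
  unfold kineticGauss
  have hK : (0:ℝ) ≤ (π ^ 2 * t ^ 4 / 3) ^ (-(d : ℝ) / 2) :=
    Real.rpow_nonneg (by positivity) _
  refine mul_le_mul_of_nonneg_left ?_ hK
  rw [← Real.exp_add]
  apply Real.exp_le_exp.mpr
  have hnorm : ‖(3:ℝ) • x - (2 * t) • v‖ ^ 2
      = 9 * ‖x‖ ^ 2 - 12 * t * (inner ℝ x v : ℝ) + 4 * t ^ 2 * ‖v‖ ^ 2 := by
    rw [norm_sub_sq_real, norm_smul, norm_smul, real_inner_smul_left, real_inner_smul_right]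
    simp only [Real.norm_eq_abs]
    rw [abs_of_nonneg (by norm_num : (0:ℝ) ≤ 3), abs_of_nonneg (by positivity : (0:ℝ) ≤ 2 * t)]
    ring
  have hinner := abs_real_inner_le_norm x v
  have core : ‖x‖ ^ 2 / 2 + t ^ 2 * ‖v‖ ^ 2 / 2
      ≤ 3 * ‖x‖ ^ 2 + ‖(3:ℝ) • x - (2 * t) • v‖ ^ 2 := by
    rw [hnorm]
    nlinarith [sq_nonneg (23 * ‖x‖ - 12 * (t * ‖v‖)),
      mul_le_mul_of_nonneg_left (abs_le.mp hinner).2 ht.le,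
      mul_le_mul_of_nonneg_left (neg_le_of_abs_le hinner) ht.le]
  have heq : -(1 / (4 * t ^ 3)) * ‖x‖ ^ 2 + -(1 / (4 * t)) * ‖v‖ ^ 2
      = -((‖x‖ ^ 2 / 2 + t ^ 2 * ‖v‖ ^ 2 / 2) / (2 * t ^ 3)) := by
    field_simp
    ring
  rw [heq, neg_div]
  apply neg_le_neg
  gcongr

end aux

/-- Mixed-norm estimate for the kinetic Gaussian density:
    ‖g_t‖_p ≤ C t^{−(d/2)(3(1−1/p_x)+(1−1/p_v))} for t ∈ (0,1]. -/
theorem kineticGauss_mixedNorm_bound (d : ℕ) (px pv : ℝ≥0∞)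
    (hpx : 1 ≤ px) (hpv : 1 ≤ pv) :
    ∃ C : ℝ, 0 ≤ C ∧ ∀ t : ℝ, t ∈ Set.Ioc (0:ℝ) 1 →
      mixedNorm d px pv (fun z => kineticGauss d t z.1 z.2)
        ≤ ENNReal.ofReal
            (C * t ^ (-((d : ℝ) / 2) *
              (3 * (1 - 1 / px).toReal + (1 - 1 / pv).toReal))) := by
  have hqx1 : (1:ℝ≥0∞) / px ≤ 1 := by rw [one_div]; exact ENNReal.inv_le_one.mpr hpx
  have hqv1 : (1:ℝ≥0∞) / pv ≤ 1 := by rw [one_div]; exact ENNReal.inv_le_one.mpr hpv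
  set qx := ((1:ℝ≥0∞) / px).toReal with hqx
  set qv := ((1:ℝ≥0∞) / pv).toReal with hqv
  have hqx0 : 0 ≤ qx := ENNReal.toReal_nonneg
  have hqv0 : 0 ≤ qv := ENNReal.toReal_nonneg
  refine ⟨(π ^ 2 / 3) ^ (-(d:ℝ)/2) * ((4*π) ^ ((d:ℝ)/2*qx) * (4*π) ^ ((d:ℝ)/2*qv)),
    by positivity, ?_⟩
  rintro t ⟨ht, ht1⟩
  have hbx0 : (0:ℝ) < 1/(4*t^3) := by positivity
  have hbv0 : (0:ℝ) < 1/(4*t) := by positivity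
  set bx := (1:ℝ)/(4*t^3) with hbx
  set bv := (1:ℝ)/(4*t) with hbv
  set K := (π ^ 2 * t ^ 4 / 3) ^ (-(d:ℝ)/2) with hK
  have hK0 : 0 ≤ K := Real.rpow_nonneg (by positivity) _
  set Gx := (π / bx) ^ ((d:ℝ)/2*qx) with hGx
  set Gv := (π / bv) ^ ((d:ℝ)/2*qv) with hGv
  have hGx0 : 0 ≤ Gx := Real.rpow_nonneg (by positivity) _
  have hGv0 : 0 ≤ Gv := Real.rpow_nonneg (by positivity) _
  have inner_le : ∀ v : EuclideanSpace ℝ (Fin d),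
      eLpNorm (fun x => kineticGauss d t x v) px volume
        ≤ ENNReal.ofReal ((K * rexp (-bv * ‖v‖ ^ 2)) * Gx) := by
    intro v
    have step1 : eLpNorm (fun x => kineticGauss d t x v) px volume
        ≤ eLpNorm ((K * rexp (-bv * ‖v‖ ^ 2)) •
            (fun y : EuclideanSpace ℝ (Fin d) => rexp (-bx * ‖y‖ ^ 2))) px volume := by
      apply eLpNorm_mono_real
      intro x
      rw [Real.norm_eq_abs, abs_of_nonneg (kineticGauss_nonneg t x v)]
      calc kineticGauss d t x v
          ≤ K * (rexp (-bx * ‖x‖ ^ 2) * rexp (-bv * ‖v‖ ^ 2)) := kineticGauss_le ht x v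
        _ = ((K * rexp (-bv * ‖v‖ ^ 2)) •
              (fun y : EuclideanSpace ℝ (Fin d) => rexp (-bx * ‖y‖ ^ 2))) x := by
            simp only [Pi.smul_apply, smul_eq_mul]; ring
    refine step1.trans ?_
    rw [eLpNorm_const_smul, Real.enorm_eq_ofReal (by positivity)]
    refine le_trans (mul_le_mul_right (gauss_eLpNorm_le hpx hbx0) _) ?_
    rw [← ENNReal.ofReal_mul (by positivity), hGx, hqx]
  have inner_toReal : ∀ v : EuclideanSpace ℝ (Fin d),
      (eLpNorm (fun x => kineticGauss d t x v) px volume).toReal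
        ≤ (K * Gx) * rexp (-bv * ‖v‖ ^ 2) := by
    intro v
    have h := ENNReal.toReal_le_of_le_ofReal (by positivity) (inner_le v)
    calc (eLpNorm (fun x => kineticGauss d t x v) px volume).toReal
        ≤ (K * rexp (-bv * ‖v‖ ^ 2)) * Gx := h
      _ = (K * Gx) * rexp (-bv * ‖v‖ ^ 2) := by ring
  have outer : mixedNorm d px pv (fun z => kineticGauss d t z.1 z.2)
      ≤ ENNReal.ofReal ((K * Gx) * Gv) := by
    unfold mixedNorm
    have step1 : eLpNorm
        (fun v => (eLpNorm (fun x => kineticGauss d t x v) px volume).toReal) pv volume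
        ≤ eLpNorm ((K * Gx) •
            (fun w : EuclideanSpace ℝ (Fin d) => rexp (-bv * ‖w‖ ^ 2))) pv volume := by
      apply eLpNorm_mono_real
      intro v
      rw [Real.norm_eq_abs, abs_of_nonneg ENNReal.toReal_nonneg]
      simpa only [Pi.smul_apply, smul_eq_mul] using inner_toReal v
    refine le_trans step1 ?_
    rw [eLpNorm_const_smul, Real.enorm_eq_ofReal (by positivity)]
    refine le_trans (mul_le_mul_right (gauss_eLpNorm_le hpv hbv0) _) ?_
    rw [← ENNReal.ofReal_mul (by positivity), hGv, hqv]
  refine outer.trans (le_of_eq ?_)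
  congr 1
  have hsub_x : ((1:ℝ≥0∞) - 1 / px).toReal = 1 - qx := by
    rw [ENNReal.toReal_sub_of_le hqx1 ENNReal.one_ne_top, ENNReal.toReal_one]
  have hsub_v : ((1:ℝ≥0∞) - 1 / pv).toReal = 1 - qv := by
    rw [ENNReal.toReal_sub_of_le hqv1 ENNReal.one_ne_top, ENNReal.toReal_one]
  have hπbx : π / bx = (4 * π) * t ^ (3:ℕ) := by rw [hbx]; field_simp
  have hπbv : π / bv = (4 * π) * t ^ (1:ℕ) := by rw [hbv]; field_simp
  have hGxval : Gx = (4 * π) ^ ((d:ℝ)/2*qx) * t ^ (((3:ℕ):ℝ) * ((d:ℝ)/2*qx)) := by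
    rw [hGx, hπbx, Real.mul_rpow (by positivity) (by positivity),
      ← Real.rpow_natCast t 3, ← Real.rpow_mul ht.le]
  have hGvval : Gv = (4 * π) ^ ((d:ℝ)/2*qv) * t ^ (((1:ℕ):ℝ) * ((d:ℝ)/2*qv)) := by
    rw [hGv, hπbv, Real.mul_rpow (by positivity) (by positivity),
      ← Real.rpow_natCast t 1, ← Real.rpow_mul ht.le]
  have hKval : K = (π ^ 2 / 3) ^ (-(d:ℝ)/2) * t ^ (((4:ℕ):ℝ) * (-(d:ℝ)/2)) := by
    rw [hK, show π ^ 2 * t ^ 4 / 3 = (π ^ 2 / 3) * t ^ (4:ℕ) by ring,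
      Real.mul_rpow (by positivity) (by positivity),
      ← Real.rpow_natCast t 4, ← Real.rpow_mul ht.le]
  rw [hKval, hGxval, hGvval, hsub_x, hsub_v,
    show -((d:ℝ)/2) * (3 * (1 - qx) + (1 - qv))
        = ((4:ℕ):ℝ) * (-(d:ℝ)/2) + (((3:ℕ):ℝ) * ((d:ℝ)/2*qx) + ((1:ℕ):ℝ) * ((d:ℝ)/2*qv))
      from by push_cast; ring,
    Real.rpow_add ht, Real.rpow_add ht]
  ring
end

section
/- Let f ∈ 𝕃^r(ℝ^{2d}) with r = (r_x, r_v) ∈ (1,∞)², f ≠ 0, and define g(x,v) = ‖f‖_r^{1−r_v} · 1_{(‖f(·,v)‖_{r_x} > 0)} · ‖f(·,v)‖_{r_x}^{r_v−r_x} · |f(x,v)|^{r_x−1} · sgn(f(x,v)). Then ∫ f(z) g(z) dz = ‖f‖_r and ‖g‖_{r'} ≤ 1, where r' is the Hölder conjugate exponent pair of r. -/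
open MeasureTheory ENNReal

/-- The explicit dual element of f in the mixed Lebesgue space:
    g(x,v) = ‖f‖_r^{1-r_v} 1_{‖f(·,v)‖_{r_x}>0} ‖f(·,v)‖_{r_x}^{r_v-r_x} |f(x,v)|^{r_x-1} sgn f(x,v). -/
noncomputable def dualElement (d : ℕ) (rx rv : ℝ)
    (f : EuclideanSpace ℝ (Fin d) × EuclideanSpace ℝ (Fin d) → ℝ)
    (z : EuclideanSpace ℝ (Fin d) × EuclideanSpace ℝ (Fin d)) : ℝ :=
  (mixedNorm d (ENNReal.ofReal rx) (ENNReal.ofReal rv) f).toReal ^ (1 - rv) *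
    (if 0 < (eLpNorm (fun x => f (x, z.2)) (ENNReal.ofReal rx) volume).toReal then
        (eLpNorm (fun x => f (x, z.2)) (ENNReal.ofReal rx) volume).toReal ^ (rv - rx) *
          |f z| ^ (rx - 1) * Real.sign (f z)
      else 0)

section Helpers

private lemma real_measurable_sign : Measurable Real.sign := by
  unfold Real.sign
  exact Measurable.ite (measurableSet_lt measurable_id measurable_const) measurable_const
    (Measurable.ite (measurableSet_lt measurable_const measurable_id) measurable_const
      measurable_const)

private lemma mul_sign_eq_abs (t : ℝ) : t * Real.sign t = |t| := by
  rcases lt_trichotomy t 0 with h | h | h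
  · rw [Real.sign_of_neg h, abs_of_neg h]; ring
  · simp [h]
  · rw [Real.sign_of_pos h, abs_of_pos h]; ring

private lemma norm_abs_rpow_sign (t s : ℝ) (hs : 0 < s) :
    ‖|t| ^ s * Real.sign t‖ = ‖‖t‖ ^ s‖ := by
  rcases eq_or_ne t 0 with rfl | h
  · simp [Real.sign_zero, Real.zero_rpow hs.ne']
  · have h1 : |Real.sign t| = 1 := by
      rcases Real.sign_apply_eq_of_ne_zero t h with h' | h' <;> simp [h']
    rw [Real.norm_eq_abs, Real.norm_eq_abs, Real.norm_eq_abs, abs_mul, h1, mul_one,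
      abs_of_nonneg (Real.rpow_nonneg (abs_nonneg t) s)]

private lemma integral_abs_rpow {α : Type*} [MeasurableSpace α] {μ : Measure α} {h : α → ℝ}
    {s : ℝ} (hs : 0 < s) (hm : MemLp h (ENNReal.ofReal s) μ) :
    ∫ x, |h x| ^ s ∂μ = (eLpNorm h (ENNReal.ofReal s) μ).toReal ^ s := by
  have h0 : ENNReal.ofReal s ≠ 0 := by simp [hs, hs.not_ge]
  have ht : (ENNReal.ofReal s).toReal = s := ENNReal.toReal_ofReal hs.le
  rw [hm.eLpNorm_eq_integral_rpow_norm h0 ENNReal.ofReal_ne_top, ht,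
    ENNReal.toReal_ofReal (by positivity),
    Real.rpow_inv_rpow (integral_nonneg fun x => Real.rpow_nonneg (norm_nonneg _) s) hs.ne']
  simp_rw [Real.norm_eq_abs]

/-- The slice norm function. -/
private noncomputable def Nfun (d : ℕ) (rx : ℝ)
    (f : EuclideanSpace ℝ (Fin d) × EuclideanSpace ℝ (Fin d) → ℝ)
    (v : EuclideanSpace ℝ (Fin d)) : ℝ :=
  (eLpNorm (fun x => f (x, v)) (ENNReal.ofReal rx) volume).toReal

/-- The scalar factor of the dual element. -/
private noncomputable def cfun (d : ℕ) (rx rv : ℝ)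
    (f : EuclideanSpace ℝ (Fin d) × EuclideanSpace ℝ (Fin d) → ℝ)
    (v : EuclideanSpace ℝ (Fin d)) : ℝ :=
  (mixedNorm d (ENNReal.ofReal rx) (ENNReal.ofReal rv) f).toReal ^ (1 - rv) *
    (if 0 < Nfun d rx f v then Nfun d rx f v ^ (rv - rx) else 0)

private lemma dualElement_eq (d : ℕ) (rx rv : ℝ)
    (f : EuclideanSpace ℝ (Fin d) × EuclideanSpace ℝ (Fin d) → ℝ)
    (z : EuclideanSpace ℝ (Fin d) × EuclideanSpace ℝ (Fin d)) :
    dualElement d rx rv f z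
      = cfun d rx rv f z.2 * (|f z| ^ (rx - 1) * Real.sign (f z)) := by
  unfold dualElement cfun Nfun
  split_ifs <;> ring

private lemma mixedNorm_eq (d : ℕ) (rx : ℝ) (pv : ℝ≥0∞)
    (f : EuclideanSpace ℝ (Fin d) × EuclideanSpace ℝ (Fin d) → ℝ) :
    mixedNorm d (ENNReal.ofReal rx) pv f = eLpNorm (Nfun d rx f) pv volume := rfl

private lemma measurable_Nfun {d : ℕ} {rx : ℝ} (hrx : 0 < rx)
    {f : EuclideanSpace ℝ (Fin d) × EuclideanSpace ℝ (Fin d) → ℝ} (hf : Measurable f) :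
    Measurable (Nfun d rx f) := by
  have h0 : ENNReal.ofReal rx ≠ 0 := by simp [hrx.not_ge]
  have heq : Nfun d rx f = fun v =>
      ((∫⁻ x, (‖f (x, v)‖₊ : ℝ≥0∞) ^ (ENNReal.ofReal rx).toReal ∂volume)
        ^ (1 / (ENNReal.ofReal rx).toReal)).toReal := by
    funext v
    simp only [Nfun, eLpNorm_eq_lintegral_rpow_enorm_toReal h0 ENNReal.ofReal_ne_top, enorm_eq_nnnorm]
  rw [heq]
  apply Measurable.ennreal_toReal
  apply Measurable.pow_const
  apply Measurable.lintegral_prod_right'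
    (f := fun vx : _ × _ => (‖f (vx.2, vx.1)‖₊ : ℝ≥0∞) ^ (ENNReal.ofReal rx).toReal)
  fun_prop

end Helpers

/-- The explicit dual element pairs with f to its mixed norm, and has conjugate
    mixed norm at most 1. -/
theorem dualElement_properties (d : ℕ) (rx rv : ℝ) (hrx : 1 < rx) (hrv : 1 < rv)
    (f : EuclideanSpace ℝ (Fin d) × EuclideanSpace ℝ (Fin d) → ℝ)
    (hf : Measurable f)
    (hfin : mixedNorm d (ENNReal.ofReal rx) (ENNReal.ofReal rv) f < ⊤)
    (hne : mixedNorm d (ENNReal.ofReal rx) (ENNReal.ofReal rv) f ≠ 0) :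
    (∫ z, f z * dualElement d rx rv f z)
        = (mixedNorm d (ENNReal.ofReal rx) (ENNReal.ofReal rv) f).toReal ∧
    mixedNorm d (ENNReal.ofReal (rx / (rx - 1))) (ENNReal.ofReal (rv / (rv - 1)))
        (dualElement d rx rv f) ≤ 1 := by
  have hrx0 : (0:ℝ) < rx := lt_trans one_pos hrx
  have hrv0 : (0:ℝ) < rv := lt_trans one_pos hrv
  set N : EuclideanSpace ℝ (Fin d) → ℝ := Nfun d rx f with hNdef
  set m : ℝ := (mixedNorm d (ENNReal.ofReal rx) (ENNReal.ofReal rv) f).toReal with hmdef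
  have hm0 : 0 < m := ENNReal.toReal_pos hne hfin.ne
  have hNnn : ∀ v, 0 ≤ N v := fun v => ENNReal.toReal_nonneg
  have hNmeas : Measurable N := measurable_Nfun hrx0 hf
  have hNq : MemLp N (ENNReal.ofReal rv) volume :=
    ⟨hNmeas.aestronglyMeasurable, by rw [hNdef, ← mixedNorm_eq]; exact hfin⟩
  have hcnn : ∀ v, 0 ≤ cfun d rx rv f v := by
    intro v
    unfold cfun
    apply mul_nonneg (Real.rpow_nonneg ENNReal.toReal_nonneg _)
    split_ifs with h
    · exact Real.rpow_nonneg (hNnn v) _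
    · exact le_refl 0
  have hp0 : ENNReal.ofReal rx ≠ 0 := by simp [hrx0.not_ge]
  have hq0 : ENNReal.ofReal rv ≠ 0 := by simp [hrv0.not_ge]
  have hmslice : ∀ v, Measurable fun x => f (x, v) := fun v =>
    hf.comp measurable_prodMk_right
  -- slices with positive norm are in Lp
  have h_slice_memLp : ∀ v, 0 < N v → MemLp (fun x => f (x, v)) (ENNReal.ofReal rx) volume := by
    intro v hv
    refine ⟨(hmslice v).aestronglyMeasurable, ?_⟩
    rw [lt_top_iff_ne_top]
    intro htop
    rw [hNdef, Nfun, htop] at hv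
    simp at hv
  have hNv_eq : ∀ v, 0 < N v →
      eLpNorm (fun x => f (x, v)) (ENNReal.ofReal rx) volume = ENNReal.ofReal (N v) := by
    intro v hv
    rw [hNdef, Nfun, ENNReal.ofReal_toReal]
    exact ((h_slice_memLp v hv).2).ne
  have hcval : ∀ v, 0 < N v → cfun d rx rv f v = m ^ (1 - rv) * N v ^ (rv - rx) := by
    intro v hv
    rw [cfun, if_pos hv]
  have hczero : ∀ v, ¬ 0 < N v → cfun d rx rv f v = 0 := by
    intro v hv
    rw [cfun, if_neg hv, mul_zero]
  have hNzero : ∀ v, ¬ 0 < N v → N v = 0 := fun v hv => le_antisymm (not_lt.1 hv) (hNnn v)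
  -- the inner eLpNorm of the dual element
  have hpp : ENNReal.ofReal (rx / (rx - 1)) * ENNReal.ofReal (rx - 1) = ENNReal.ofReal rx := by
    rw [← ENNReal.ofReal_mul (le_of_lt (div_pos hrx0 (by linarith)))]
    congr 1
    rw [div_mul_eq_mul_div, mul_div_assoc, div_self (by linarith : rx - 1 ≠ 0), mul_one]
  have key_inner : ∀ v,
      eLpNorm (fun x => dualElement d rx rv f (x, v)) (ENNReal.ofReal (rx / (rx - 1))) volume
        = ENNReal.ofReal (m ^ (1 - rv) * N v ^ (rv - 1)) := by
    intro v
    have hrw : (fun x => dualElement d rx rv f (x, v))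
        = cfun d rx rv f v • fun x => |f (x, v)| ^ (rx - 1) * Real.sign (f (x, v)) := by
      funext x
      rw [dualElement_eq d rx rv f (x, v)]
      simp [smul_eq_mul]
    rw [hrw, eLpNorm_const_smul,
      eLpNorm_congr_norm_ae (ae_of_all _ fun x =>
        norm_abs_rpow_sign (f (x, v)) (rx - 1) (by linarith)),
      eLpNorm_norm_rpow _ (by linarith : (0:ℝ) < rx - 1), hpp]
    by_cases hNv : 0 < N v
    · rw [hNv_eq v hNv, ENNReal.ofReal_rpow_of_pos hNv,
        Real.enorm_eq_ofReal (hcnn v), ← ENNReal.ofReal_mul (hcnn v), hcval v hNv]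
      congr 1
      rw [mul_assoc, ← Real.rpow_add hNv]
      ring_nf
    · rw [hczero v hNv, hNzero v hNv]
      simp [Real.zero_rpow (by linarith : rv - 1 ≠ 0)]
  have hmN : (eLpNorm N (ENNReal.ofReal rv) volume).toReal = m := rfl
  -- Part 2: the conjugate mixed norm equals 1
  have part2 : mixedNorm d (ENNReal.ofReal (rx / (rx - 1))) (ENNReal.ofReal (rv / (rv - 1)))
      (dualElement d rx rv f) = 1 := by
    unfold mixedNorm
    have h1 : (fun v => (eLpNorm (fun x => dualElement d rx rv f (x, v))
          (ENNReal.ofReal (rx / (rx - 1))) volume).toReal)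
        = (m ^ (1 - rv)) • fun v => ‖N v‖ ^ (rv - 1) := by
      funext v
      rw [key_inner v, ENNReal.toReal_ofReal
        (mul_nonneg (Real.rpow_nonneg hm0.le _) (Real.rpow_nonneg (hNnn v) _))]
      rw [Pi.smul_apply, smul_eq_mul, Real.norm_of_nonneg (hNnn v)]
    rw [h1, eLpNorm_const_smul, eLpNorm_norm_rpow _ (by linarith : (0:ℝ) < rv - 1)]
    have hqq : ENNReal.ofReal (rv / (rv - 1)) * ENNReal.ofReal (rv - 1) = ENNReal.ofReal rv := by
      rw [← ENNReal.ofReal_mul (le_of_lt (div_pos hrv0 (by linarith)))]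
      congr 1
      rw [div_mul_eq_mul_div, mul_div_assoc, div_self (by linarith : rv - 1 ≠ 0), mul_one]
    have hNm : eLpNorm N (ENNReal.ofReal rv) volume = ENNReal.ofReal m := by
      rw [← hmN, ENNReal.ofReal_toReal]
      rw [hNdef, ← mixedNorm_eq]
      exact hfin.ne
    rw [hqq, hNm, Real.enorm_eq_ofReal (Real.rpow_nonneg hm0.le _),
      ← ENNReal.ofReal_rpow_of_pos hm0,
      ← ENNReal.rpow_add _ _ (ENNReal.ofReal_pos.mpr hm0).ne' ENNReal.ofReal_ne_top,
      show (1 : ℝ) - rv + (rv - 1) = 0 by ring, ENNReal.rpow_zero]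
  -- pointwise identity for the pairing integrand
  have hfg : ∀ z, f z * dualElement d rx rv f z = cfun d rx rv f z.2 * |f z| ^ rx := by
    intro z
    rw [dualElement_eq]
    have h1 : (1:ℝ) + (rx - 1) = rx := by ring
    have habs : |f z| ^ rx = |f z| * |f z| ^ (rx - 1) := by
      calc |f z| ^ rx = |f z| ^ ((1:ℝ) + (rx - 1)) := by rw [h1]
        _ = |f z| ^ (1:ℝ) * |f z| ^ (rx - 1) :=
            Real.rpow_add' (abs_nonneg _) (by rw [h1]; linarith)
        _ = |f z| * |f z| ^ (rx - 1) := by rw [Real.rpow_one]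
    rw [habs]
    calc f z * (cfun d rx rv f z.2 * (|f z| ^ (rx - 1) * Real.sign (f z)))
        = cfun d rx rv f z.2 * ((f z * Real.sign (f z)) * |f z| ^ (rx - 1)) := by ring
      _ = cfun d rx rv f z.2 * (|f z| * |f z| ^ (rx - 1)) := by rw [mul_sign_eq_abs]
  have hfg' : ∀ v, (fun x => f (x, v) * dualElement d rx rv f (x, v))
      = fun x => cfun d rx rv f v * |f (x, v)| ^ rx :=
    fun v => funext fun x => hfg (x, v)
  have h_int_rpow : ∀ v, 0 < N v → Integrable (fun x => |f (x, v)| ^ rx) volume := by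
    intro v hv
    have h2 := (h_slice_memLp v hv).integrable_norm_rpow hp0 ENNReal.ofReal_ne_top
    rw [ENNReal.toReal_ofReal hrx0.le] at h2
    simpa [Real.norm_eq_abs] using h2
  have h_slice_int : ∀ v, Integrable (fun x => f (x, v) * dualElement d rx rv f (x, v)) volume := by
    intro v
    rw [hfg' v]
    by_cases hv : 0 < N v
    · exact (h_int_rpow v hv).const_mul _
    · simp only [hczero v hv, zero_mul]
      exact integrable_zero _ _ _
  have h_inner_val : ∀ v, (∫ x, f (x, v) * dualElement d rx rv f (x, v))
      = m ^ (1 - rv) * N v ^ rv := by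
    intro v
    rw [hfg' v, integral_const_mul]
    by_cases hv : 0 < N v
    · rw [integral_abs_rpow hrx0 (h_slice_memLp v hv)]
      have hNv' : (eLpNorm (fun x => f (x, v)) (ENNReal.ofReal rx) volume).toReal = N v := rfl
      rw [hNv', hcval v hv, mul_assoc, ← Real.rpow_add hv,
        show rv - rx + rx = rv by ring]
    · rw [hczero v hv, hNzero v hv, Real.zero_rpow hrv0.ne']
      simp
  have h_norm_val : ∀ v, (∫ x, ‖f (x, v) * dualElement d rx rv f (x, v)‖)
      = m ^ (1 - rv) * N v ^ rv := by
    intro v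
    rw [← h_inner_val v]
    refine integral_congr_ae (ae_of_all _ fun x => ?_)
    show ‖f (x, v) * dualElement d rx rv f (x, v)‖ = f (x, v) * dualElement d rx rv f (x, v)
    rw [hfg (x, v), Real.norm_eq_abs,
      abs_of_nonneg (mul_nonneg (hcnn _) (Real.rpow_nonneg (abs_nonneg _) _))]
  have hcmeas : Measurable (cfun d rx rv f) := by
    have hNm2 := measurable_Nfun hrx0 hf
    unfold cfun
    apply Measurable.mul measurable_const
    exact Measurable.ite (measurableSet_lt measurable_const hNm2) (by fun_prop) measurable_const
  have hgmeas : Measurable (dualElement d rx rv f) := by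
    have h1 : Measurable fun z : EuclideanSpace ℝ (Fin d) × EuclideanSpace ℝ (Fin d) =>
        |f z| ^ (rx - 1) := by fun_prop
    have h2 := real_measurable_sign.comp hf
    have h3 : dualElement d rx rv f
        = fun z => cfun d rx rv f z.2 * (|f z| ^ (rx - 1) * Real.sign (f z)) :=
      funext (dualElement_eq d rx rv f)
    rw [h3]
    exact (hcmeas.comp measurable_snd).mul (h1.mul h2)
  have hNrv_int : Integrable (fun v => N v ^ rv) volume := by
    have h2 := hNq.integrable_norm_rpow hq0 ENNReal.ofReal_ne_top
    rw [ENNReal.toReal_ofReal hrv0.le] at h2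
    refine h2.congr (ae_of_all _ fun v => ?_)
    show ‖N v‖ ^ rv = N v ^ rv
    rw [Real.norm_eq_abs, abs_of_nonneg (hNnn v)]
  have h_int : Integrable (fun z => f z * dualElement d rx rv f z) volume := by
    rw [MeasureTheory.Measure.volume_eq_prod]
    refine (integrable_prod_iff' ((hf.mul hgmeas).aestronglyMeasurable)).mpr
      ⟨ae_of_all _ h_slice_int, ?_⟩
    have h4 : (fun v => ∫ x, ‖f (x, v) * dualElement d rx rv f (x, v)‖)
        = fun v => m ^ (1 - rv) * N v ^ rv := funext h_norm_val
    simp only [Pi.mul_apply]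
    rw [h4]
    exact hNrv_int.const_mul _
  have hint_eq : (∫ z, f z * dualElement d rx rv f z)
      = ∫ v, ∫ x, f (x, v) * dualElement d rx rv f (x, v) := by
    rw [MeasureTheory.Measure.volume_eq_prod]
    exact integral_prod_symm _ (by rwa [MeasureTheory.Measure.volume_eq_prod] at h_int)
  constructor
  · rw [hint_eq]
    have h5 : (fun v => ∫ x, f (x, v) * dualElement d rx rv f (x, v))
        = fun v => m ^ (1 - rv) * N v ^ rv := funext h_inner_val
    rw [h5, integral_const_mul]
    have hNint : (∫ v, N v ^ rv) = m ^ rv := by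
      calc (∫ v, N v ^ rv) = ∫ v, |N v| ^ rv :=
            integral_congr_ae (ae_of_all _ fun v => by
              show N v ^ rv = |N v| ^ rv
              rw [abs_of_nonneg (hNnn v)])
        _ = m ^ rv := by rw [integral_abs_rpow hrv0 hNq, hmN]
    rw [hNint, ← Real.rpow_add hm0, show 1 - rv + rv = 1 by ring, Real.rpow_one]
  · exact part2.le
end
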